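/- arXiv:1211.1498 — 3 statements merged into one kernel-verified Lean document; each statement's English description precedes it below -/
import Mathlib

section
/- There exist absolute constants 0 < c ≤ C (independent of p, of the sequence λ, and of f) such that for every real p with 1 ≤ p < ∞, every strictly increasing sequence λ : ℤ → ℝ with λ_n → −∞ as n → −∞ and λ_n → +∞ as n → +∞, and every f : ℤ → ℂ, the homogeneous trace seminorm satisfies c·(∑_{n∈ℤ} (λ_{n+1} − λ_n)|f[λ_n,λ_{n+1}]|^p)^{1/p} ≤ ‖f‖_{L^1_p|Λ} ≤ C·(∑_{n∈ℤ} (λ_{n+1} − λ_n)|f[λ_n,λ_{n+1}]|^p)^{1/p}, where both sides are interpreted in [0,∞]. -/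
open MeasureTheory
open scoped ENNReal NNReal

/-- `lam` is a strictly increasing sequence tending to `-∞` at `-∞` and `+∞` at `+∞`. -/
def GoodSeq (lam : ℤ → ℝ) : Prop :=
  StrictMono lam ∧ Filter.Tendsto lam Filter.atBot Filter.atBot ∧
    Filter.Tendsto lam Filter.atTop Filter.atTop

/-- `F` is an admissible `r`-extension of `f : ℤ → ℂ`, with associated `r`-th derivative `G`:
`F` is `(r-1)` times continuously differentiable, `G` is locally integrable,
`F^{(r-1)}(b) - F^{(r-1)}(a) = ∫_a^b G` for all `a ≤ b`, and `F (lam n) = f n` for all `n`. -/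
def AdmissibleExt (r : ℕ) (lam : ℤ → ℝ) (f : ℤ → ℂ) (F G : ℝ → ℂ) : Prop :=
  ContDiff ℝ (r - 1 : ℕ) F ∧ MeasureTheory.LocallyIntegrable G volume ∧
  (∀ a b : ℝ, a ≤ b →
      iteratedDeriv (r - 1) F b - iteratedDeriv (r - 1) F a = ∫ t in a..b, G t) ∧
  (∀ n : ℤ, F (lam n) = f n)

/-- Homogeneous trace seminorm `‖f‖_{L^r_p|Λ}`, valued in `[0,∞]`. -/
noncomputable def traceL (r : ℕ) (p : ℝ) (lam : ℤ → ℝ) (f : ℤ → ℂ) : ℝ≥0∞ :=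
  ⨅ (F : ℝ → ℂ) (G : ℝ → ℂ) (_ : AdmissibleExt r lam f F G),
    (∫⁻ t, ENNReal.ofReal (‖G t‖ ^ p)) ^ (1 / p)

/-- Trace norm `‖f‖_{W^r_p|Λ}`, valued in `[0,∞]`. -/
noncomputable def traceW (r : ℕ) (p : ℝ) (lam : ℤ → ℝ) (f : ℤ → ℂ) : ℝ≥0∞ :=
  ⨅ (F : ℝ → ℂ) (G : ℝ → ℂ) (_ : AdmissibleExt r lam f F G),
    ((∫⁻ t, ENNReal.ofReal (‖F t‖ ^ p)) +
      (∫⁻ t, ENNReal.ofReal (‖G t‖ ^ p))) ^ (1 / p)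

/-- First order divided difference `f[λ_n, λ_{n+1}]`. -/
noncomputable def dd1 (lam : ℤ → ℝ) (f : ℤ → ℂ) (n : ℤ) : ℂ :=
  (f (n + 1) - f n) / ((lam (n + 1) - lam n : ℝ) : ℂ)

/-- Second order divided difference `f[λ_n, λ_{n+1}, λ_{n+2}]`. -/
noncomputable def dd2 (lam : ℤ → ℝ) (f : ℤ → ℂ) (n : ℤ) : ℂ :=
  (dd1 lam f (n + 1) - dd1 lam f n) / ((lam (n + 2) - lam n : ℝ) : ℂ)

/-- Divided difference `f[λ_n, …, λ_{n+k}]` of order `k`. -/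
noncomputable def ddiv (lam : ℤ → ℝ) (f : ℤ → ℂ) (n : ℤ) (k : ℕ) : ℂ :=
  ∑ i ∈ Finset.range (k + 1),
    f (n + (i : ℤ)) /
      ∏ j ∈ (Finset.range (k + 1)).erase i,
        ((lam (n + (i : ℤ)) - lam (n + (j : ℤ)) : ℝ) : ℂ)

/-- Divided difference of values `v` at (distinct) points `x`. -/
noncomputable def ddPts {m : ℕ} (x : Fin m → ℝ) (v : Fin m → ℂ) : ℂ :=
  ∑ i, v i / ∏ j ∈ Finset.univ.erase i, ((x i - x j : ℝ) : ℂ)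

/-- `F` is of class `W^r` on `[a,b]` with `r`-th derivative `G`. -/
def ClassW (r : ℕ) (a b : ℝ) (F G : ℝ → ℂ) : Prop :=
  ContDiffOn ℝ (r - 1 : ℕ) F (Set.Icc a b) ∧ MeasureTheory.IntegrableOn G (Set.Icc a b) ∧
  ∀ x y : ℝ, a ≤ x → x ≤ y → y ≤ b →
    iteratedDerivWithin (r - 1) F (Set.Icc a b) y -
      iteratedDerivWithin (r - 1) F (Set.Icc a b) x = ∫ t in x..y, G t

/-- `‖f‖_{eq,L}^p`, valued in `[0,∞]`. -/
noncomputable def eqLp (r : ℕ) (p : ℝ) (lam : ℤ → ℝ) (f : ℤ → ℂ) : ℝ≥0∞ :=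
  ∑' n : ℤ, ENNReal.ofReal ((lam (n + (r : ℤ)) - lam n) * ‖ddiv lam f n r‖ ^ p)

/-- `‖f‖_{eq,W}^p`, valued in `[0,∞]`. -/
noncomputable def eqWp (r : ℕ) (p : ℝ) (lam : ℤ → ℝ) (f : ℤ → ℂ) : ℝ≥0∞ :=
  eqLp r p lam f +
    ∑ j ∈ Finset.range r, ∑' n : ℤ,
      ENNReal.ofReal ((lam (n + (r : ℤ)) - lam n) ^ ((j : ℝ) * p + 1) *
        ‖ddiv lam f n j‖ ^ p)

/-- The cubic `q(x) = 4(x² - x³)`. -/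
noncomputable def qcub : ℝ → ℝ := fun x => 4 * (x ^ 2 - x ^ 3)

/-- `α_n(f) = (h_n f[λ_{n-1},λ_n] + h_{n-1} f[λ_n,λ_{n+1}])/(h_{n-1}+h_n)`. -/
noncomputable def alphaN (lam : ℤ → ℝ) (f : ℤ → ℂ) (n : ℤ) : ℂ :=
  (((lam (n + 1) - lam n : ℝ) : ℂ) * dd1 lam f (n - 1) +
      ((lam n - lam (n - 1) : ℝ) : ℂ) * dd1 lam f n) /
    ((lam (n + 1) - lam (n - 1) : ℝ) : ℂ)

/-- The formula for `Φ₁ f` on `[λ_n, λ_{n+1}]`. -/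
noncomputable def phi1P (lam : ℤ → ℝ) (f : ℤ → ℂ) (n : ℤ) (x : ℝ) : ℂ :=
  f n * (((lam (n + 1) - x) / (lam (n + 1) - lam n) : ℝ) : ℂ) +
    f (n + 1) * (((x - lam n) / (lam (n + 1) - lam n) : ℝ) : ℂ)

/-- The formula for `Φ₂ f` on `[μ_{n-1}, λ_n]`. -/
noncomputable def phi2L (lam : ℤ → ℝ) (f : ℤ → ℂ) (n : ℤ) (x : ℝ) : ℂ :=
  f n + alphaN lam f n * ((x - lam n : ℝ) : ℂ) +
    (((lam n - lam (n - 1)) ^ 2 : ℝ) : ℂ) * dd2 lam f (n - 1) *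
      ((qcub ((lam n - x) / (lam n - lam (n - 1))) : ℝ) : ℂ)

/-- The formula for `Φ₂ f` on `[λ_n, μ_n]`. -/
noncomputable def phi2R (lam : ℤ → ℝ) (f : ℤ → ℂ) (n : ℤ) (x : ℝ) : ℂ :=
  f n + alphaN lam f n * ((x - lam n : ℝ) : ℂ) +
    (((lam (n + 1) - lam n) ^ 2 : ℝ) : ℂ) * dd2 lam f (n - 1) *
      ((qcub ((x - lam n) / (lam (n + 1) - lam n)) : ℝ) : ℂ)

namespace Stmt0Aux

variable {lam : ℤ → ℝ}

lemma exists_idx (hlam : GoodSeq lam) (x : ℝ) :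
    ∃ n : ℤ, lam n ≤ x ∧ ∀ m : ℤ, lam m ≤ x → m ≤ n := by
  obtain ⟨hmono, hbot, htop⟩ := hlam
  obtain ⟨N, hN⟩ := Filter.eventually_atTop.mp (Filter.tendsto_atTop.mp htop (x + 1))
  obtain ⟨M, hM⟩ := Filter.eventually_atBot.mp (Filter.tendsto_atBot.mp hbot x)
  apply Int.exists_greatest_of_bdd
  · refine ⟨N, fun z hz => ?_⟩
    by_contra h
    push_neg at h
    have := hN z h.le
    linarith
  · exact ⟨M, hM M le_rfl⟩

noncomputable def nIdx (hlam : GoodSeq lam) (x : ℝ) : ℤ := (exists_idx hlam x).choose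

lemma nIdx_le (hlam : GoodSeq lam) (x : ℝ) : lam (nIdx hlam x) ≤ x :=
  (exists_idx hlam x).choose_spec.1

lemma le_nIdx (hlam : GoodSeq lam) {x : ℝ} {m : ℤ} (h : lam m ≤ x) : m ≤ nIdx hlam x :=
  (exists_idx hlam x).choose_spec.2 m h

lemma lt_next (hlam : GoodSeq lam) (x : ℝ) : x < lam (nIdx hlam x + 1) := by
  by_contra h
  push_neg at h
  have := le_nIdx hlam h
  omega

lemma nIdx_eq (hlam : GoodSeq lam) {x : ℝ} {n : ℤ} (h1 : lam n ≤ x) (h2 : x < lam (n + 1)) :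
    nIdx hlam x = n := by
  have hle : n ≤ nIdx hlam x := le_nIdx hlam h1
  by_contra h
  have : n + 1 ≤ nIdx hlam x := by omega
  have := (hlam.1.monotone this).trans (nIdx_le hlam x)
  linarith

lemma nIdx_lam (hlam : GoodSeq lam) (n : ℤ) : nIdx hlam (lam n) = n :=
  nIdx_eq hlam le_rfl (hlam.1 (by omega))

lemma nIdx_mono (hlam : GoodSeq lam) {x y : ℝ} (h : x ≤ y) : nIdx hlam x ≤ nIdx hlam y :=
  le_nIdx hlam ((nIdx_le hlam x).trans h)

noncomputable def Gf (hlam : GoodSeq lam) (f : ℤ → ℂ) : ℝ → ℂ :=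
  fun x => dd1 lam f (nIdx hlam x)

noncomputable def Ff (hlam : GoodSeq lam) (f : ℤ → ℂ) : ℝ → ℂ :=
  fun x => f (nIdx hlam x) +
    dd1 lam f (nIdx hlam x) * ((x - lam (nIdx hlam x) : ℝ) : ℂ)

lemma dd1_mul (hlam : GoodSeq lam) (f : ℤ → ℂ) (n : ℤ) :
    dd1 lam f n * ((lam (n + 1) - lam n : ℝ) : ℂ) = f (n + 1) - f n := by
  have h : lam n < lam (n + 1) := hlam.1 (by omega)
  rw [dd1, div_mul_cancel₀]
  exact_mod_cast Complex.ofReal_ne_zero.mpr (by linarith)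

lemma Ff_lam (hlam : GoodSeq lam) (f : ℤ → ℂ) (n : ℤ) : Ff hlam f (lam n) = f n := by
  simp [Ff, nIdx_lam hlam n]

lemma Ff_eq (hlam : GoodSeq lam) (f : ℤ → ℂ) {n : ℤ} {x : ℝ}
    (h1 : lam n ≤ x) (h2 : x ≤ lam (n + 1)) :
    Ff hlam f x = f n + dd1 lam f n * ((x - lam n : ℝ) : ℂ) := by
  rcases h2.lt_or_eq with h | h
  · simp [Ff, nIdx_eq hlam h1 h]
  · subst h
    rw [Ff_lam hlam f (n + 1), dd1_mul hlam f n]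
    ring

lemma meas_nIdx (hlam : GoodSeq lam) : Measurable (nIdx hlam) := by
  apply measurable_to_countable'
  intro n
  have : nIdx hlam ⁻¹' {n} = Set.Ico (lam n) (lam (n + 1)) := by
    ext x
    simp only [Set.mem_preimage, Set.mem_singleton_iff, Set.mem_Ico]
    constructor
    · rintro rfl
      exact ⟨nIdx_le hlam x, lt_next hlam x⟩
    · rintro ⟨h1, h2⟩
      exact nIdx_eq hlam h1 h2
  rw [this]
  exact measurableSet_Ico

lemma meas_Gf (hlam : GoodSeq lam) (f : ℤ → ℂ) : Measurable (Gf hlam f) :=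
  (measurable_from_top (f := fun n : ℤ => dd1 lam f n)).comp (meas_nIdx hlam)

lemma intOn (hlam : GoodSeq lam) (f : ℤ → ℂ) (a b : ℝ) :
    IntegrableOn (Gf hlam f) (Set.Icc a b) := by
  rcases le_or_gt a b with hab | hab
  · have hne : (Finset.Icc (nIdx hlam a) (nIdx hlam b)).Nonempty :=
      Finset.nonempty_Icc.mpr (nIdx_mono hlam hab)
    set C := (Finset.Icc (nIdx hlam a) (nIdx hlam b)).sup' hne
      (fun n => ‖dd1 lam f n‖) with hC
    apply Measure.integrableOn_of_bounded (M := C)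
    · simp [Real.volume_Icc]
    · exact (meas_Gf hlam f).stronglyMeasurable.aestronglyMeasurable
    · rw [ae_restrict_iff' measurableSet_Icc]
      refine Filter.Eventually.of_forall fun x hx => ?_
      refine Finset.le_sup' (fun n => ‖dd1 lam f n‖) ?_
      exact Finset.mem_Icc.mpr ⟨nIdx_mono hlam hx.1, nIdx_mono hlam hx.2⟩
  · rw [Set.Icc_eq_empty (not_le.mpr hab)]
    exact integrableOn_empty

lemma locInt (hlam : GoodSeq lam) (f : ℤ → ℂ) : LocallyIntegrable (Gf hlam f) volume :=
  fun x => ⟨Set.Icc (x - 1) (x + 1),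
    Icc_mem_nhds (by linarith) (by linarith), intOn hlam f _ _⟩

lemma intervalInt (hlam : GoodSeq lam) (f : ℤ → ℂ) (a b : ℝ) :
    IntervalIntegrable (Gf hlam f) volume a b := by
  rw [intervalIntegrable_iff]
  exact (intOn hlam f (min a b) (max a b)).mono_set Set.Ioc_subset_Icc_self

lemma integA (hlam : GoodSeq lam) (f : ℤ → ℂ) {n : ℤ} {x : ℝ}
    (h1 : lam n ≤ x) (h2 : x ≤ lam (n + 1)) :
    ∫ t in (lam n)..x, Gf hlam f t = dd1 lam f n * ((x - lam n : ℝ) : ℂ) := by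
  have hae : ∀ᵐ t ∂(volume : Measure ℝ), t ∈ Set.uIoc (lam n) x →
      Gf hlam f t = dd1 lam f n := by
    have h0 : ∀ᵐ t ∂(volume : Measure ℝ), t ≠ lam (n + 1) := by
      rw [Filter.eventually_iff, mem_ae_iff]
      have : {t : ℝ | t ≠ lam (n + 1)}ᶜ = {lam (n + 1)} := by
        ext t; simp
      rw [this]
      exact Real.volume_singleton
    filter_upwards [h0] with t ht hmem
    rw [Set.uIoc_of_le h1] at hmem
    have : nIdx hlam t = n :=
      nIdx_eq hlam hmem.1.le (lt_of_le_of_ne (hmem.2.trans h2) ht)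
    simp [Gf, this]
  rw [intervalIntegral.integral_congr_ae hae, intervalIntegral.integral_const]
  rw [Complex.real_smul]
  ring

lemma integB (hlam : GoodSeq lam) (f : ℤ → ℂ) {n : ℤ} {a b : ℝ}
    (h1 : lam n ≤ a) (hab : a ≤ b) (h2 : b ≤ lam (n + 1)) :
    Ff hlam f b - Ff hlam f a = ∫ t in a..b, Gf hlam f t := by
  have e1 := integA hlam f h1 (hab.trans h2)
  have e2 := integA hlam f (h1.trans hab) h2
  have e3 : (∫ t in (lam n)..b, Gf hlam f t) - ∫ t in (lam n)..a, Gf hlam f t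
      = ∫ t in a..b, Gf hlam f t :=
    intervalIntegral.integral_interval_sub_left (intervalInt hlam f _ _)
      (intervalInt hlam f _ _)
  rw [Ff_eq hlam f (h1.trans hab) h2, Ff_eq hlam f h1 (hab.trans h2), ← e3, e1, e2]
  ring

lemma ftc (hlam : GoodSeq lam) (f : ℤ → ℂ) {a b : ℝ} (hab : a ≤ b) :
    Ff hlam f b - Ff hlam f a = ∫ t in a..b, Gf hlam f t := by
  have key : ∀ k : ℕ, ∀ a b : ℝ, a ≤ b → nIdx hlam b ≤ nIdx hlam a + k →
      Ff hlam f b - Ff hlam f a = ∫ t in a..b, Gf hlam f t := by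
    intro k
    induction k with
    | zero =>
      intro a b hab hk
      have heq : nIdx hlam b = nIdx hlam a :=
        le_antisymm (by omega) (nIdx_mono hlam hab)
      exact integB hlam f (nIdx_le hlam a) hab (by rw [← heq]; exact (lt_next hlam b).le)
    | succ k ih =>
      intro a b hab hk
      by_cases h : nIdx hlam b ≤ nIdx hlam a + k
      · exact ih a b hab h
      · set c := lam (nIdx hlam a + 1) with hc
        have hac : a ≤ c := (lt_next hlam a).le
        have hcb : c ≤ b :=
          le_trans (hlam.1.monotone (by omega : nIdx hlam a + 1 ≤ nIdx hlam b))
            (nIdx_le hlam b)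
        have e1 : Ff hlam f c - Ff hlam f a = ∫ t in a..c, Gf hlam f t :=
          integB hlam f (nIdx_le hlam a) hac le_rfl
        have e2 : Ff hlam f b - Ff hlam f c = ∫ t in c..b, Gf hlam f t :=
          ih c b hcb (by rw [hc, nIdx_lam hlam]; omega)
        have e3 : (∫ t in a..c, Gf hlam f t) + ∫ t in c..b, Gf hlam f t
            = ∫ t in a..b, Gf hlam f t :=
          intervalIntegral.integral_add_adjacent_intervals (intervalInt hlam f _ _)
            (intervalInt hlam f _ _)
        rw [← e3, ← e1, ← e2]
        ring
  exact key (nIdx hlam b - nIdx hlam a).toNat a b hab (by omega)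

lemma contF (hlam : GoodSeq lam) (f : ℤ → ℂ) : Continuous (Ff hlam f) := by
  have heq : Ff hlam f = fun x => Ff hlam f 0 + ∫ t in (0:ℝ)..x, Gf hlam f t := by
    funext x
    rcases le_total (0:ℝ) x with h | h
    · rw [← ftc hlam f h]; ring
    · rw [intervalIntegral.integral_symm, ← ftc hlam f h]; ring
  rw [heq]
  exact continuous_const.add
    (intervalIntegral.continuous_primitive (fun a b => intervalInt hlam f a b) 0)

lemma hunion (hlam : GoodSeq lam) :
    (⋃ n : ℤ, Set.Ico (lam n) (lam (n + 1))) = Set.univ := by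
  ext x
  simp only [Set.mem_iUnion, Set.mem_Ico, Set.mem_univ, iff_true]
  exact ⟨nIdx hlam x, nIdx_le hlam x, lt_next hlam x⟩

lemma hdisj (hlam : GoodSeq lam) :
    Pairwise (Function.onFun Disjoint fun n : ℤ => Set.Ico (lam n) (lam (n + 1))) := by
  intro m n hmn
  rcases hmn.lt_or_gt with h | h
  · refine Set.Ico_disjoint_Ico.mpr ?_
    calc min (lam (m + 1)) (lam (n + 1)) ≤ lam (m + 1) := min_le_left _ _
    _ ≤ lam n := hlam.1.monotone (by omega)
    _ ≤ max (lam m) (lam n) := le_max_right _ _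
  · refine Set.Ico_disjoint_Ico.mpr ?_
    calc min (lam (m + 1)) (lam (n + 1)) ≤ lam (n + 1) := min_le_right _ _
    _ ≤ lam m := hlam.1.monotone (by omega)
    _ ≤ max (lam m) (lam n) := le_max_left _ _

lemma lintegral_split (hlam : GoodSeq lam) (g : ℝ → ℝ≥0∞) :
    ∫⁻ t, g t = ∑' n : ℤ, ∫⁻ t in Set.Ico (lam n) (lam (n + 1)), g t := by
  rw [← setLIntegral_univ, ← hunion hlam,
    lintegral_iUnion (fun n => measurableSet_Ico) (hdisj hlam)]

lemma lintG (hlam : GoodSeq lam) (f : ℤ → ℂ) (p : ℝ) :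
    ∫⁻ t, ENNReal.ofReal (‖Gf hlam f t‖ ^ p) =
      ∑' n : ℤ, ENNReal.ofReal ((lam (n + 1) - lam n) *
        ‖dd1 lam f n‖ ^ p) := by
  rw [lintegral_split hlam]
  refine tsum_congr fun n => ?_
  have hcongr : ∀ᵐ t ∂(volume : Measure ℝ), t ∈ Set.Ico (lam n) (lam (n + 1)) →
      ENNReal.ofReal (‖Gf hlam f t‖ ^ p) =
        (fun _ : ℝ => ENNReal.ofReal (‖dd1 lam f n‖ ^ p)) t := by
    refine Filter.Eventually.of_forall fun t ht => ?_
    simp [Gf, nIdx_eq hlam ht.1 ht.2]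
  rw [setLIntegral_congr_fun_ae measurableSet_Ico hcongr, setLIntegral_const,
    Real.volume_Ico, ← ENNReal.ofReal_mul (by positivity), mul_comm]

/-- Key per-interval lower bound. -/
lemma keyLower {p : ℝ} (hp : 1 ≤ p) {G : ℝ → ℂ} (hG : AEStronglyMeasurable G volume)
    {a b : ℝ} (hab : a < b) {z : ℂ}
    (hz : z = ∫ t in a..b, G t) :
    ENNReal.ofReal ((b - a) * ‖z / ((b - a : ℝ) : ℂ)‖ ^ p) ≤
      ∫⁻ t in Set.Ico a b, ENNReal.ofReal (‖G t‖ ^ p) := by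
  have hp0 : (0:ℝ) < p := lt_of_lt_of_le one_pos hp
  have hh : (0:ℝ) < b - a := by linarith
  set Δ : ℝ := ‖z‖ with hΔ
  set A : ℝ≥0∞ := ∫⁻ t in Set.Ico a b, ENNReal.ofReal (‖G t‖ ^ p) with hA
  -- rewrite |z / (b-a)| = Δ / (b - a)
  have habs : ‖z / ((b - a : ℝ) : ℂ)‖ = Δ / (b - a) := by
    rw [norm_div, Complex.norm_real, Real.norm_eq_abs, abs_of_pos hh]
  rw [habs]
  -- step B
  have hIcoIoc : ∫⁻ t in Set.Ico a b, (‖G t‖₊ : ℝ≥0∞) =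
      ∫⁻ t in Set.Ioc a b, (‖G t‖₊ : ℝ≥0∞) :=
    setLIntegral_congr (Ico_ae_eq_Icc.trans Ioc_ae_eq_Icc.symm)
  have hB : ENNReal.ofReal Δ ≤ ∫⁻ t in Set.Ico a b, (‖G t‖₊ : ℝ≥0∞) := by
    rw [hIcoIoc, hΔ, ofReal_norm, hz,
      intervalIntegral.integral_of_le hab.le]
    exact enorm_integral_le_lintegral_enorm _
  have hnn : ∀ t : ℝ, (‖G t‖₊ : ℝ≥0∞) = ENNReal.ofReal (‖G t‖) := by
    intro t
    exact (ofReal_norm (G t)).symm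
  rcases eq_or_lt_of_le hp with hp1 | hp1
  · -- p = 1
    subst hp1
    have : (b - a) * (Δ / (b - a)) ^ (1:ℝ) = Δ := by
      rw [Real.rpow_one]
      field_simp
    rw [this]
    refine hB.trans (le_of_eq ?_)
    refine setLIntegral_congr_fun measurableSet_Ico
      (fun t _ => ?_)
    rw [hnn t, Real.rpow_one]
  · -- 1 < p, Hölder
    set q : ℝ := Real.conjExponent p with hq
    have hpq : p.HolderConjugate q := Real.HolderConjugate.conjExponent hp1
    set μ' : Measure ℝ := volume.restrict (Set.Ico a b) with hμ'
    have hmeasf : AEMeasurable (fun t => (‖G t‖₊ : ℝ≥0∞)) μ' :=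
      hG.restrict.nnnorm.aemeasurable.coe_nnreal_ennreal
    have hHolder := ENNReal.lintegral_mul_le_Lp_mul_Lq μ' hpq hmeasf
      (aemeasurable_const (b := (1:ℝ≥0∞)))
    simp only [Pi.mul_apply, mul_one, ENNReal.one_rpow, lintegral_const,
      Measure.restrict_apply, Set.univ_inter, MeasurableSet.univ, one_mul] at hHolder
    have hApow : ∫⁻ t, (‖G t‖₊ : ℝ≥0∞) ^ p ∂μ' = A := by
      rw [hA, hμ']
      refine lintegral_congr fun t => ?_
      rw [hnn t, ENNReal.ofReal_rpow_of_nonneg (norm_nonneg _) hp0.le]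
    have hvol : μ' Set.univ = ENNReal.ofReal (b - a) := by
      rw [hμ', Measure.restrict_apply_univ, Real.volume_Ico]
    rw [hApow, hvol] at hHolder
    have hBle : ENNReal.ofReal Δ ≤ A ^ (1/p) * ENNReal.ofReal (b - a) ^ (1/q) :=
      hB.trans hHolder
    -- raise to p-th power
    have hpow := ENNReal.rpow_le_rpow hBle hp0.le
    rw [ENNReal.mul_rpow_of_nonneg _ _ hp0.le, ← ENNReal.rpow_mul, ← ENNReal.rpow_mul,
      one_div_mul_cancel hp0.ne', ENNReal.rpow_one] at hpow
    have hqp : 1 / q * p = p - 1 := by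
      rw [hq, Real.conjExponent]
      field_simp
    rw [hqp] at hpow
    -- LHS rewriting
    have hreal : (b - a) * (Δ / (b - a)) ^ p = Δ ^ p / (b - a) ^ (p - 1) := by
      rw [Real.div_rpow (norm_nonneg _) hh.le, Real.rpow_sub hh, Real.rpow_one]
      have : (b - a) ^ p ≠ 0 := (Real.rpow_pos_of_pos hh p).ne'
      field_simp
      ring
    rw [hreal, ENNReal.ofReal_div_of_pos (Real.rpow_pos_of_pos hh _),
      ← ENNReal.ofReal_rpow_of_nonneg (norm_nonneg _) hp0.le,
      ← ENNReal.ofReal_rpow_of_nonneg hh.le (by linarith : (0:ℝ) ≤ p - 1)]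
    exact ENNReal.div_le_of_le_mul hpow

lemma admissible (hlam : GoodSeq lam) (f : ℤ → ℂ) :
    AdmissibleExt 1 lam f (Ff hlam f) (Gf hlam f) := by
  refine ⟨?_, locInt hlam f, ?_, Ff_lam hlam f⟩
  · have h0 : ContDiff ℝ (0 : ℕ∞) (Ff hlam f) := contDiff_zero.mpr (contF hlam f)
    simpa using h0
  · intro a b hab
    show iteratedDeriv 0 (Ff hlam f) b - iteratedDeriv 0 (Ff hlam f) a = _
    rw [iteratedDeriv_zero]
    exact ftc hlam f hab

end Stmt0Aux

/-- equivalence of the homogeneous trace seminorm `‖·‖_{L^1_p|Λ}` with the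
discrete seminorm `(∑_n (λ_{n+1}-λ_n)|f[λ_n,λ_{n+1}]|^p)^{1/p}`, with absolute constants. -/
theorem stmt0 :
    ∃ c C : ℝ, 0 < c ∧ c ≤ C ∧
      ∀ p : ℝ, 1 ≤ p → ∀ lam : ℤ → ℝ, GoodSeq lam → ∀ f : ℤ → ℂ,
        ENNReal.ofReal c *
            (∑' n : ℤ, ENNReal.ofReal ((lam (n + 1) - lam n) *
              ‖dd1 lam f n‖ ^ p)) ^ (1 / p) ≤ traceL 1 p lam f ∧
        traceL 1 p lam f ≤
          ENNReal.ofReal C *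
            (∑' n : ℤ, ENNReal.ofReal ((lam (n + 1) - lam n) *
              ‖dd1 lam f n‖ ^ p)) ^ (1 / p) := by
  refine ⟨1, 1, one_pos, le_rfl, ?_⟩
  intro p hp lam hlam f
  have hp0 : (0:ℝ) < p := lt_of_lt_of_le one_pos hp
  rw [ENNReal.ofReal_one, one_mul]
  constructor
  · -- lower bound
    refine le_iInf fun F => le_iInf fun G => le_iInf fun hFG => ?_
    obtain ⟨hF1, hF2, hF3, hF4⟩ := hFG
    refine ENNReal.rpow_le_rpow ?_ (by positivity)
    have hkey : ∀ n : ℤ,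
        ENNReal.ofReal ((lam (n + 1) - lam n) * ‖dd1 lam f n‖ ^ p) ≤
          ∫⁻ t in Set.Ico (lam n) (lam (n + 1)),
            ENNReal.ofReal (‖G t‖ ^ p) := by
      intro n
      have hab : lam n < lam (n + 1) := hlam.1 (by omega)
      have hz : f (n + 1) - f n = ∫ t in (lam n)..(lam (n + 1)), G t := by
        have := hF3 (lam n) (lam (n + 1)) hab.le
        rw [show (1 - 1 : ℕ) = 0 from rfl, iteratedDeriv_zero] at this
        rw [← this, hF4 n, hF4 (n + 1)]
      exact Stmt0Aux.keyLower hp hF2.aestronglyMeasurable hab hz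
    calc ∑' n : ℤ, ENNReal.ofReal ((lam (n + 1) - lam n) *
          ‖dd1 lam f n‖ ^ p)
        ≤ ∑' n : ℤ, ∫⁻ t in Set.Ico (lam n) (lam (n + 1)),
            ENNReal.ofReal (‖G t‖ ^ p) := ENNReal.tsum_le_tsum hkey
      _ = ∫⁻ t, ENNReal.ofReal (‖G t‖ ^ p) :=
          (Stmt0Aux.lintegral_split hlam _).symm
  · -- upper bound
    refine iInf_le_of_le (Stmt0Aux.Ff hlam f) ?_
    refine iInf_le_of_le (Stmt0Aux.Gf hlam f) ?_
    refine iInf_le_of_le (Stmt0Aux.admissible hlam f) ?_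
    rw [Stmt0Aux.lintG hlam f p]
end

section
/- There exist absolute constants 0 < c ≤ C (independent of p, of the sequence λ, and of f) such that for every real p with 1 ≤ p < ∞, every strictly increasing sequence λ : ℤ → ℝ with λ_n → ±∞ as n → ±∞, and every f : ℤ → ℂ, the homogeneous trace seminorm satisfies c·(∑_{n∈ℤ} (λ_{n+2} − λ_n)|f[λ_n,λ_{n+1},λ_{n+2}]|^p)^{1/p} ≤ ‖f‖_{L^2_p|Λ} ≤ C·(∑_{n∈ℤ} (λ_{n+2} − λ_n)|f[λ_n,λ_{n+1},λ_{n+2}]|^p)^{1/p}, both sides interpreted in [0,∞]. -/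
open MeasureTheory
open scoped ENNReal NNReal

namespace Stmt2X

variable {lam : ℤ → ℝ} {f : ℤ → ℂ}

lemma lam_lt (hl : StrictMono lam) {m n : ℤ} (h : m < n) : lam m < lam n := hl h

lemma exists_index (hl : GoodSeq lam) (x : ℝ) :
    ∃ n : ℤ, (lam n ≤ x ∧ x < lam (n + 1)) ∧ ∀ z : ℤ, lam z ≤ x → z ≤ n := by
  obtain ⟨hm, hb, ht⟩ := hl
  obtain ⟨n0, hn0⟩ := (hb.eventually (Filter.eventually_le_atBot x)).exists
  obtain ⟨m0, hm0⟩ := (ht.eventually (Filter.eventually_gt_atTop x)).exists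
  obtain ⟨n, hn, hmax⟩ := Int.exists_greatest_of_bdd
    (P := fun z => lam z ≤ x)
    ⟨m0, fun z hz => by
      by_contra h
      exact absurd (le_trans (hm.le_iff_le.2 (by omega : m0 ≤ z)) hz) (not_le.2 hm0)⟩
    ⟨n0, hn0⟩
  refine ⟨n, ⟨hn, ?_⟩, hmax⟩
  by_contra h
  exact absurd (hmax (n+1) (not_lt.1 h)) (by omega)


noncomputable def idx (hl : GoodSeq lam) (x : ℝ) : ℤ := (exists_index hl x).choose

lemma idx_le (hl : GoodSeq lam) (x : ℝ) : lam (idx hl x) ≤ x :=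
  (exists_index hl x).choose_spec.1.1

lemma lt_idx (hl : GoodSeq lam) (x : ℝ) : x < lam (idx hl x + 1) :=
  (exists_index hl x).choose_spec.1.2

lemma idx_eq (hl : GoodSeq lam) {x : ℝ} {n : ℤ} (h1 : lam n ≤ x) (h2 : x < lam (n+1)) :
    idx hl x = n := by
  have hA := idx_le hl x
  have hB := lt_idx hl x
  by_contra h
  rcases lt_or_gt_of_ne h with hc | hc
  · exact absurd (le_trans (hl.1.le_iff_le.2 (by omega : idx hl x + 1 ≤ n)) h1) (not_le.2 hB)
  · exact absurd (le_trans (hl.1.le_iff_le.2 (by omega : n + 1 ≤ idx hl x)) hA) (not_le.2 h2)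

lemma idx_lam (hl : GoodSeq lam) (n : ℤ) : idx hl (lam n) = n :=
  idx_eq hl le_rfl (hl.1 (by omega))


/-- coefficients of the Hermite cubic on `[lam n, lam (n+1)]`. -/
noncomputable def c2c (lam : ℤ → ℝ) (f : ℤ → ℂ) (n : ℤ) : ℂ :=
  2 * dd2 lam f (n-1) - dd2 lam f n

noncomputable def c3c (lam : ℤ → ℝ) (f : ℤ → ℂ) (n : ℤ) : ℂ :=
  (dd2 lam f n - dd2 lam f (n-1)) / ((lam (n+1) - lam n : ℝ) : ℂ)

noncomputable def Pe (lam : ℤ → ℝ) (f : ℤ → ℂ) (n : ℤ) (z : ℂ) : ℂ :=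
  f n + alphaN lam f n * (z - lam n) + c2c lam f n * (z - lam n)^2 +
    c3c lam f n * (z - lam n)^3

noncomputable def dPe (lam : ℤ → ℝ) (f : ℤ → ℂ) (n : ℤ) (z : ℂ) : ℂ :=
  alphaN lam f n + 2 * c2c lam f n * (z - lam n) + 3 * c3c lam f n * (z - lam n)^2

noncomputable def Qe (lam : ℤ → ℝ) (f : ℤ → ℂ) (n : ℤ) (z : ℂ) : ℂ :=
  2 * c2c lam f n + 6 * c3c lam f n * (z - lam n)

lemma hne (hl : StrictMono lam) {m n : ℤ} (h : m < n) :
    ((lam n - lam m : ℝ) : ℂ) ≠ 0 := by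
  exact_mod_cast sub_ne_zero.2 (ne_of_gt (hl h))

lemma alpha_eq (hl : StrictMono lam) (n : ℤ) :
    alphaN lam f n = dd1 lam f n - ((lam (n+1) - lam n : ℝ) : ℂ) * dd2 lam f (n-1) := by
  have e1 : n - 1 + 1 = n := by ring
  have e2 : n - 1 + 2 = n + 1 := by ring
  have h1 : ((lam (n+1) - lam n : ℝ) : ℂ) ≠ 0 := hne hl (by omega)
  have h2 : ((lam n - lam (n-1) : ℝ) : ℂ) ≠ 0 := hne hl (by omega)
  have h3 : ((lam (n+1) - lam (n-1) : ℝ) : ℂ) ≠ 0 := hne hl (by omega)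
  simp only [alphaN, dd2, dd1, e1, e2]
  push_cast at h1 h2 h3 ⊢
  field_simp
  ring

lemma alpha_succ (hl : StrictMono lam) (n : ℤ) :
    alphaN lam f (n+1) = dd1 lam f n + ((lam (n+1) - lam n : ℝ) : ℂ) * dd2 lam f n := by
  have e1 : n + 1 - 1 = n := by ring
  have h1 : ((lam (n+1) - lam n : ℝ) : ℂ) ≠ 0 := hne hl (by omega)
  have h2 : ((lam (n+2) - lam (n+1) : ℝ) : ℂ) ≠ 0 := hne hl (by omega)
  have h3 : ((lam (n+2) - lam n : ℝ) : ℂ) ≠ 0 := hne hl (by omega)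
  simp only [alphaN, dd2, dd1, e1]
  have e2 : n + 1 + 1 = n + 2 := by ring
  simp only [e2]
  push_cast at h1 h2 h3 ⊢
  field_simp
  ring

lemma Pe_left : Pe lam f n (lam n) = f n := by simp [Pe]

lemma dPe_left : dPe lam f n (lam n) = alphaN lam f n := by simp [dPe]

lemma Pe_right (hl : StrictMono lam) (n : ℤ) : Pe lam f n (lam (n+1)) = f (n+1) := by
  have h1 : ((lam (n+1) - lam n : ℝ) : ℂ) ≠ 0 := hne hl (by omega)
  have hd : f (n+1) = f n + ((lam (n+1) - lam n : ℝ) : ℂ) * dd1 lam f n := by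
    have h1 : ((lam (n+1) - lam n : ℝ) : ℂ) ≠ 0 := hne hl (by omega)
    rw [dd1, mul_div_assoc']
    rw [mul_comm, mul_div_assoc, div_self h1, mul_one]
    ring
  rw [Pe, c2c, c3c, alpha_eq hl, hd]
  push_cast at h1 ⊢
  field_simp
  ring

lemma dPe_right (hl : StrictMono lam) (n : ℤ) :
    dPe lam f n (lam (n+1)) = alphaN lam f (n+1) := by
  have h1 : ((lam (n+1) - lam n : ℝ) : ℂ) ≠ 0 := hne hl (by omega)
  rw [dPe, c2c, c3c, alpha_eq hl, alpha_succ hl]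
  push_cast at h1 ⊢
  field_simp
  ring


lemma hasDerivAt_Pe (n : ℤ) (z : ℂ) : HasDerivAt (Pe lam f n) (dPe lam f n z) z := by
  have h : HasDerivAt (fun w : ℂ => w - (lam n : ℂ)) 1 z := (hasDerivAt_id z).sub_const _
  have h1 := (h.pow 2).const_mul (c2c lam f n)
  have h2 := (h.pow 3).const_mul (c3c lam f n)
  have h0 := h.const_mul (alphaN lam f n)
  have := (((h0.const_add (f n)).add h1).add h2)
  have heq : Pe lam f n = fun w => f n + alphaN lam f n * (w - (lam n : ℂ)) +
      c2c lam f n * (w - (lam n : ℂ))^2 + c3c lam f n * (w - (lam n : ℂ))^3 := by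
    funext w; simp [Pe]
  rw [heq]
  convert this using 1
  show alphaN lam f n + 2 * c2c lam f n * (z - lam n) + 3 * c3c lam f n * (z - lam n)^2 = _
  norm_num <;> ring
  all_goals rfl

lemma hasDerivAt_dPe (n : ℤ) (z : ℂ) : HasDerivAt (dPe lam f n) (Qe lam f n z) z := by
  have h : HasDerivAt (fun w : ℂ => w - (lam n : ℂ)) 1 z := (hasDerivAt_id z).sub_const _
  have h1 := h.const_mul (2 * c2c lam f n)
  have h2 := (h.pow 2).const_mul (3 * c3c lam f n)
  have := (h1.const_add (alphaN lam f n)).add h2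
  have heq : dPe lam f n = fun w => alphaN lam f n + 2 * c2c lam f n * (w - (lam n : ℂ)) +
      3 * c3c lam f n * (w - (lam n : ℂ))^2 := by
    funext w; simp [dPe]
  rw [heq]
  convert this using 1
  show 2 * c2c lam f n + 6 * c3c lam f n * (z - lam n) = _
  norm_num <;> ring
  all_goals rfl

/-- the spline extension -/
noncomputable def Fc (hl : GoodSeq lam) (f : ℤ → ℂ) (x : ℝ) : ℂ := Pe lam f (idx hl x) x

noncomputable def Fd (hl : GoodSeq lam) (f : ℤ → ℂ) (x : ℝ) : ℂ := dPe lam f (idx hl x) x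

noncomputable def Gc (hl : GoodSeq lam) (f : ℤ → ℂ) (x : ℝ) : ℂ := Qe lam f (idx hl x) x

lemma Fc_eq (hl : GoodSeq lam) {n : ℤ} {x : ℝ}
    (hx : x ∈ Set.Icc (lam n) (lam (n+1))) : Fc hl f x = Pe lam f n x := by
  rcases lt_or_eq_of_le hx.2 with h | h
  · rw [Fc, idx_eq hl hx.1 h]
  · have : idx hl x = n + 1 := idx_eq hl h.ge (h ▸ hl.1 (by omega))
    rw [Fc, this, h]
    rw [show ((lam (n+1) : ℝ) : ℂ) = ((lam (n+1+1-1) : ℝ) : ℂ) by norm_num]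
    rw [show (n+1+1-1 : ℤ) = n + 1 by ring, Pe_left, Pe_right hl.1]

lemma Fd_eq (hl : GoodSeq lam) {n : ℤ} {x : ℝ}
    (hx : x ∈ Set.Icc (lam n) (lam (n+1))) : Fd hl f x = dPe lam f n x := by
  rcases lt_or_eq_of_le hx.2 with h | h
  · rw [Fd, idx_eq hl hx.1 h]
  · have : idx hl x = n + 1 := idx_eq hl h.ge (h ▸ hl.1 (by omega))
    rw [Fd, this, h]
    rw [show ((lam (n+1) : ℝ) : ℂ) = ((lam (n+1+1-1) : ℝ) : ℂ) by norm_num]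
    rw [show (n+1+1-1 : ℤ) = n + 1 by ring, dPe_left, dPe_right hl.1]

lemma Fc_lam (hl : GoodSeq lam) (n : ℤ) : Fc hl f (lam n) = f n := by
  rw [Fc, idx_lam hl, Pe_left]


lemma icc_mem_nhdsWithin_Ici (hl : GoodSeq lam) {n : ℤ} {x : ℝ}
    (h1 : lam n ≤ x) (h2 : x < lam (n+1)) :
    Set.Icc (lam n) (lam (n+1)) ∈ nhdsWithin x (Set.Ici x) :=
  mem_nhdsWithin.2 ⟨Set.Iio (lam (n+1)), isOpen_Iio, h2,
    fun y hy => ⟨h1.trans hy.2, hy.1.le⟩⟩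

lemma icc_mem_nhdsWithin_Iic (hl : GoodSeq lam) {n : ℤ} {x : ℝ}
    (h1 : lam n < x) (h2 : x ≤ lam (n+1)) :
    Set.Icc (lam n) (lam (n+1)) ∈ nhdsWithin x (Set.Iic x) :=
  mem_nhdsWithin.2 ⟨Set.Ioi (lam n), isOpen_Ioi, h1,
    fun y hy => ⟨hy.1.le, hy.2.trans h2⟩⟩

lemma hasDerivWithinAt_Fc_piece (hl : GoodSeq lam) (n : ℤ) {x : ℝ}
    (hx : x ∈ Set.Icc (lam n) (lam (n+1))) {s : Set ℝ}
    (hs : Set.Icc (lam n) (lam (n+1)) ∈ nhdsWithin x s) :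
    HasDerivWithinAt (Fc hl f) (dPe lam f n x) s x := by
  have h := ((hasDerivAt_Pe (lam := lam) (f := f) n (x : ℂ)).comp_ofReal).hasDerivWithinAt
    (s := Set.Icc (lam n) (lam (n+1)))
  exact (h.congr (fun y hy => Fc_eq hl hy) (Fc_eq hl hx)).mono_of_mem_nhdsWithin hs

lemma hasDerivWithinAt_Fd_piece (hl : GoodSeq lam) (n : ℤ) {x : ℝ}
    (hx : x ∈ Set.Icc (lam n) (lam (n+1))) {s : Set ℝ}
    (hs : Set.Icc (lam n) (lam (n+1)) ∈ nhdsWithin x s) :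
    HasDerivWithinAt (Fd hl f) (Qe lam f n x) s x := by
  have h := ((hasDerivAt_dPe (lam := lam) (f := f) n (x : ℂ)).comp_ofReal).hasDerivWithinAt
    (s := Set.Icc (lam n) (lam (n+1)))
  exact (h.congr (fun y hy => Fd_eq hl hy) (Fd_eq hl hx)).mono_of_mem_nhdsWithin hs

lemma mem_icc_idx (hl : GoodSeq lam) (x : ℝ) :
    x ∈ Set.Icc (lam (idx hl x)) (lam (idx hl x + 1)) :=
  ⟨idx_le hl x, (lt_idx hl x).le⟩

lemma mem_icc_pred (hl : GoodSeq lam) (n : ℤ) :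
    lam n ∈ Set.Icc (lam (n-1)) (lam (n-1+1)) := by
  constructor
  · exact (hl.1 (by omega)).le
  · rw [show (n-1+1 : ℤ) = n by ring]

lemma hasDerivAt_Fc (hl : GoodSeq lam) (x : ℝ) :
    HasDerivAt (Fc hl f) (Fd hl f x) x := by
  set n := idx hl x with hn
  have hx := mem_icc_idx hl x
  rw [Fd_eq hl hx]
  rcases lt_or_eq_of_le hx.1 with h | h
  · -- interior of the piece: two-sided
    have hIci := hasDerivWithinAt_Fc_piece (f := f) hl n hx (icc_mem_nhdsWithin_Ici hl hx.1 (lt_idx hl x))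
    have hIic := hasDerivWithinAt_Fc_piece (f := f) hl n hx (icc_mem_nhdsWithin_Iic hl h hx.2)
    have := hIic.union hIci
    rw [Set.Iic_union_Ici] at this
    exact hasDerivWithinAt_univ.1 this
  · -- x = lam n : use piece n-1 on the left
    have hx' : x ∈ Set.Icc (lam (n-1)) (lam (n-1+1)) := h ▸ mem_icc_pred hl n
    have hval : dPe lam f n x = dPe lam f (n-1) x := by
      rw [← Fd_eq hl hx, ← Fd_eq hl hx']
    have hIci := hasDerivWithinAt_Fc_piece (f := f) hl n hx (icc_mem_nhdsWithin_Ici hl hx.1 (lt_idx hl x))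
    have hIic := hasDerivWithinAt_Fc_piece (f := f) hl (n-1) hx'
      (icc_mem_nhdsWithin_Iic hl (lt_of_lt_of_le (hl.1 (by omega : n - 1 < n)) hx.1) hx'.2)
    rw [← hval] at hIic
    have := hIic.union hIci
    rw [Set.Iic_union_Ici] at this
    exact hasDerivWithinAt_univ.1 this

lemma continuous_Fd (hl : GoodSeq lam) : Continuous (Fd hl f) := by
  rw [continuous_iff_continuousAt]
  intro x
  set n := idx hl x with hn
  have hx := mem_icc_idx hl x
  have hIci := (hasDerivWithinAt_Fd_piece (f := f) hl n hx
    (icc_mem_nhdsWithin_Ici hl hx.1 (lt_idx hl x))).continuousWithinAt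
  rcases lt_or_eq_of_le hx.1 with h | h
  · have hIic := (hasDerivWithinAt_Fd_piece (f := f) hl n hx
      (icc_mem_nhdsWithin_Iic hl h hx.2)).continuousWithinAt
    have := hIic.union hIci
    rw [Set.Iic_union_Ici] at this
    exact (continuousWithinAt_univ _ _).1 this
  · have hx' : x ∈ Set.Icc (lam (n-1)) (lam (n-1+1)) := h ▸ mem_icc_pred hl n
    have hIic := (hasDerivWithinAt_Fd_piece (f := f) hl (n-1) hx'
      (icc_mem_nhdsWithin_Iic hl (lt_of_lt_of_le (hl.1 (by omega : n - 1 < n)) h.le) hx'.2)).continuousWithinAt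
    have := hIic.union hIci
    rw [Set.Iic_union_Ici] at this
    exact (continuousWithinAt_univ _ _).1 this

lemma hasDerivWithinAt_Fd_Ioi (hl : GoodSeq lam) (x : ℝ) :
    HasDerivWithinAt (Fd hl f) (Gc hl f x) (Set.Ioi x) x := by
  have hx := mem_icc_idx hl x
  have h := hasDerivWithinAt_Fd_piece (f := f) hl (idx hl x) hx
    (nhdsWithin_mono x (Set.Ioi_subset_Ici_self) (icc_mem_nhdsWithin_Ici hl hx.1 (lt_idx hl x)))
  exact h


lemma Gc_eq_on (hl : GoodSeq lam) {n : ℤ} {x : ℝ}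
    (hx : x ∈ Set.Ico (lam n) (lam (n+1))) : Gc hl f x = Qe lam f n x := by
  rw [Gc, idx_eq hl hx.1 hx.2]

lemma continuous_Qe_real (n : ℤ) : Continuous (fun y : ℝ => Qe lam f n (y : ℂ)) := by
  unfold Qe
  fun_prop

lemma integrableOn_Gc_Ico (hl : GoodSeq lam) (n : ℤ) :
    IntegrableOn (Gc hl f) (Set.Ico (lam n) (lam (n+1))) volume := by
  have h : IntegrableOn (fun y : ℝ => Qe lam f n (y : ℂ)) (Set.Ico (lam n) (lam (n+1))) :=
    ((continuous_Qe_real (lam := lam) (f := f) n).integrableOn_Icc (a := lam n)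
      (b := lam (n+1))).mono_set Set.Ico_subset_Icc_self
  exact h.congr_fun (fun y hy => (Gc_eq_on hl hy).symm) measurableSet_Ico

lemma idx_mono (hl : GoodSeq lam) {x y : ℝ} (h : x ≤ y) : idx hl x ≤ idx hl y := by
  by_contra hc
  exact absurd ((hl.1.le_iff_le.2 (by omega : idx hl y + 1 ≤ idx hl x)).trans
    ((idx_le hl x).trans h)) (not_le.2 (lt_idx hl y))

lemma subset_iUnion_Ico (hl : GoodSeq lam) (a b : ℝ) :
    Set.Icc a b ⊆ ⋃ n ∈ Finset.Icc (idx hl a) (idx hl b),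
      Set.Ico (lam n) (lam (n+1)) := by
  intro x hx
  refine Set.mem_biUnion (Finset.mem_Icc.2 ⟨idx_mono hl hx.1, idx_mono hl hx.2⟩) ?_
  exact ⟨idx_le hl x, lt_idx hl x⟩

lemma integrableOn_Gc_Icc (hl : GoodSeq lam) (a b : ℝ) :
    IntegrableOn (Gc hl f) (Set.Icc a b) volume := by
  refine (MeasureTheory.integrableOn_finset_iUnion.2 ?_).mono_set (subset_iUnion_Ico hl a b)
  exact fun n _ => integrableOn_Gc_Ico hl n

lemma locallyIntegrable_Gc (hl : GoodSeq lam) :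
    MeasureTheory.LocallyIntegrable (Gc hl f) volume := by
  rw [MeasureTheory.locallyIntegrable_iff]
  intro K hK
  obtain ⟨r, hr⟩ := (Metric.isBounded_iff_subset_closedBall 0).1 hK.isBounded
  rw [Real.closedBall_eq_Icc] at hr
  exact (integrableOn_Gc_Icc hl _ _).mono_set hr

lemma admissible (hl : GoodSeq lam) : AdmissibleExt 2 lam f (Fc hl f) (Gc hl f) := by
  have hderiv : deriv (Fc hl f) = Fd hl f := funext fun x => (hasDerivAt_Fc hl x).deriv
  refine ⟨?_, locallyIntegrable_Gc hl, ?_, fun n => Fc_lam hl n⟩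
  · show ContDiff ℝ ((1 : ℕ) : ℕ∞) (Fc hl f)
    refine contDiff_one_iff_deriv.2 ⟨fun x => (hasDerivAt_Fc hl x).differentiableAt, ?_⟩
    rw [hderiv]; exact continuous_Fd hl
  · intro a b hab
    show iteratedDeriv 1 _ _ - iteratedDeriv 1 _ _ = _
    rw [iteratedDeriv_one, hderiv]
    refine (intervalIntegral.integral_eq_sub_of_hasDeriv_right_of_le hab
      ((continuous_Fd hl).continuousOn) (fun x _ => hasDerivWithinAt_Fd_Ioi hl x) ?_).symm
    exact ((integrableOn_Gc_Icc hl a b).mono_set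
      (by rw [Set.uIcc_of_le hab])).intervalIntegrable


/-- pointwise bound for the second derivative of the spline on piece `n`. -/
noncomputable def Kb (lam : ℤ → ℝ) (f : ℤ → ℂ) (n : ℤ) : ℝ :=
  10 * (‖dd2 lam f (n-1)‖ + ‖dd2 lam f n‖)

lemma Qe_bound (hl : StrictMono lam) (n : ℤ) {x : ℝ}
    (hx : x ∈ Set.Ico (lam n) (lam (n+1))) :
    ‖Qe lam f n (x : ℂ)‖ ≤ Kb lam f n := by
  set A := ‖dd2 lam f (n-1)‖ with hA
  set B := ‖dd2 lam f n‖ with hB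
  have hh : (0:ℝ) < lam (n+1) - lam n := sub_pos.2 (hl (by omega))
  have h1 : ‖Qe lam f n (x : ℂ)‖ ≤
      ‖2 * c2c lam f n‖ + ‖6 * c3c lam f n * ((x : ℂ) - (lam n : ℂ))‖ :=
    norm_add_le _ _
  have h2 : ‖2 * c2c lam f n‖ ≤ 2 * (2 * A + B) := by
    rw [norm_mul]
    simp only [Complex.norm_two]
    refine mul_le_mul_of_nonneg_left ?_ (by norm_num)
    calc ‖c2c lam f n‖ ≤ ‖2 * dd2 lam f (n-1)‖ + ‖dd2 lam f n‖ :=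
        norm_sub_le _ _
    _ = 2 * A + B := by rw [norm_mul, Complex.norm_two]
  have habs : ‖(x : ℂ) - (lam n : ℂ)‖ ≤ lam (n+1) - lam n := by
    rw [← Complex.ofReal_sub, Complex.norm_real, Real.norm_eq_abs, abs_of_nonneg (sub_nonneg.2 hx.1)]
    linarith [hx.2]
  have hc3 : ‖c3c lam f n‖ * ‖(x:ℂ) - (lam n : ℂ)‖ ≤ A + B := by
    rw [c3c, norm_div]
    have hden : ‖((lam (n+1) - lam n : ℝ) : ℂ)‖ = lam (n+1) - lam n := by
      rw [Complex.norm_real, Real.norm_eq_abs, abs_of_pos hh]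
    rw [hden, div_mul_eq_mul_div, div_le_iff₀ hh]
    have hnum : ‖dd2 lam f n - dd2 lam f (n-1)‖ ≤ A + B := by
      rw [add_comm]; exact norm_sub_le _ _
    calc ‖dd2 lam f n - dd2 lam f (n-1)‖ * ‖(x:ℂ) - (lam n:ℂ)‖
        ≤ (A + B) * (lam (n+1) - lam n) :=
        mul_le_mul hnum habs (norm_nonneg _) (by positivity)
    _ = (A + B) * (lam (n+1) - lam n) := rfl
  have h3 : ‖6 * c3c lam f n * ((x : ℂ) - (lam n : ℂ))‖ ≤ 6 * (A + B) := by
    rw [norm_mul, norm_mul]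
    have : ‖(6 : ℂ)‖ = 6 := by
      rw [show (6:ℂ) = ((6:ℝ):ℂ) by norm_num, Complex.norm_real]; norm_num
    rw [this, mul_assoc]
    exact mul_le_mul_of_nonneg_left hc3 (by norm_num)
  calc ‖Qe lam f n (x : ℂ)‖ ≤ 2 * (2 * A + B) + 6 * (A + B) := le_trans h1 (add_le_add h2 h3)
  _ ≤ Kb lam f n := by rw [Kb, ← hA, ← hB]; nlinarith [norm_nonneg (dd2 lam f (n-1)), norm_nonneg (dd2 lam f n)]

lemma piece_lintegral_bound (hl : GoodSeq lam) {p : ℝ} (hp : 0 ≤ p) (n : ℤ) :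
    ∫⁻ t in Set.Ico (lam n) (lam (n+1)), ENNReal.ofReal (‖Gc hl f t‖ ^ p) ≤
      ENNReal.ofReal (lam (n+1) - lam n) * ENNReal.ofReal (Kb lam f n ^ p) := by
  have h1 : ∀ x ∈ Set.Ico (lam n) (lam (n+1)),
      ENNReal.ofReal (‖Gc hl f x‖ ^ p) ≤ ENNReal.ofReal (Kb lam f n ^ p) := by
    intro x hx
    refine ENNReal.ofReal_le_ofReal ?_
    rw [Gc_eq_on hl hx]
    exact Real.rpow_le_rpow (norm_nonneg _) (Qe_bound hl.1 n hx) hp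
  calc ∫⁻ t in Set.Ico (lam n) (lam (n+1)), ENNReal.ofReal (‖Gc hl f t‖ ^ p)
      ≤ ∫⁻ _ in Set.Ico (lam n) (lam (n+1)), ENNReal.ofReal (Kb lam f n ^ p) :=
      setLIntegral_mono' measurableSet_Ico h1
  _ = ENNReal.ofReal (Kb lam f n ^ p) * volume (Set.Ico (lam n) (lam (n+1))) :=
      setLIntegral_const _ _
  _ = ENNReal.ofReal (lam (n+1) - lam n) * ENNReal.ofReal (Kb lam f n ^ p) := by
      rw [Real.volume_Ico, mul_comm]

lemma iUnion_Ico (hl : GoodSeq lam) :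
    (⋃ n : ℤ, Set.Ico (lam n) (lam (n+1))) = Set.univ := by
  ext x
  simp only [Set.mem_iUnion, Set.mem_univ, iff_true]
  exact ⟨idx hl x, idx_le hl x, lt_idx hl x⟩

lemma disjoint_Ico (hl : GoodSeq lam) :
    Pairwise (Function.onFun Disjoint (fun n : ℤ => Set.Ico (lam n) (lam (n+1)))) := by
  intro m n hmn
  refine Set.disjoint_left.2 fun x hxm hxn => hmn ?_
  rw [← idx_eq hl hxm.1 hxm.2, ← idx_eq hl hxn.1 hxn.2]

lemma lintegral_Gc_eq (hl : GoodSeq lam) (g : ℝ → ℝ≥0∞) :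
    ∫⁻ t, g t = ∑' n : ℤ, ∫⁻ t in Set.Ico (lam n) (lam (n+1)), g t := by
  rw [← lintegral_iUnion (fun n => measurableSet_Ico) (disjoint_Ico hl) g, iUnion_Ico hl,
    Measure.restrict_univ]


lemma ten_mul_add_rpow {u v p : ℝ} (hu : 0 ≤ u) (hv : 0 ≤ v) (hp : 0 ≤ p) :
    (10*(u+v))^p ≤ 20^p * (u^p + v^p) := by
  have h1 : 10*(u+v) ≤ 20 * max u v := by
    rcases le_total u v with h | h
    · rw [max_eq_right h]; linarith
    · rw [max_eq_left h]; linarith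
  have h2 : (10*(u+v))^p ≤ (20 * max u v)^p :=
    Real.rpow_le_rpow (by positivity) h1 hp
  have h3 : (20 * max u v)^p = 20^p * (max u v)^p :=
    Real.mul_rpow (by norm_num) (le_max_of_le_left hu)
  have h4 : (max u v)^p ≤ u^p + v^p := by
    rcases le_total u v with h | h
    · rw [max_eq_right h]; nlinarith [Real.rpow_nonneg hu p]
    · rw [max_eq_left h]; nlinarith [Real.rpow_nonneg hv p]
  calc (10*(u+v))^p ≤ 20^p * (max u v)^p := h3 ▸ h2
  _ ≤ 20^p * (u^p + v^p) := mul_le_mul_of_nonneg_left h4 (Real.rpow_nonneg (by norm_num) p)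

lemma sum_piece (hl : GoodSeq lam) {p : ℝ} (hp : 0 ≤ p) :
    ∑' n : ℤ, ENNReal.ofReal (lam (n+1) - lam n) * ENNReal.ofReal (Kb lam f n ^ p) ≤
      ENNReal.ofReal (20^p) *
        ∑' n : ℤ, ENNReal.ofReal ((lam (n + 2) - lam n) * ‖dd2 lam f n‖ ^ p) := by
  set H : ℤ → ℝ≥0∞ := fun n => ENNReal.ofReal (lam (n+1) - lam n) with hH
  set T : ℤ → ℝ≥0∞ := fun n => ENNReal.ofReal (‖dd2 lam f n‖ ^ p) with hT
  have step1 : ∀ n : ℤ, H n * ENNReal.ofReal (Kb lam f n ^ p) ≤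
      ENNReal.ofReal (20^p) * (H n * T (n-1) + H n * T n) := by
    intro n
    have hK : ENNReal.ofReal (Kb lam f n ^ p) ≤ ENNReal.ofReal (20^p) * (T (n-1) + T n) := by
      rw [hT]
      rw [← ENNReal.ofReal_add (Real.rpow_nonneg (norm_nonneg _) p)
        (Real.rpow_nonneg (norm_nonneg _) p),
        ← ENNReal.ofReal_mul (Real.rpow_nonneg (by norm_num) p)]
      exact ENNReal.ofReal_le_ofReal
        (ten_mul_add_rpow (norm_nonneg _) (norm_nonneg _) hp)
    calc H n * ENNReal.ofReal (Kb lam f n ^ p) ≤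
        H n * (ENNReal.ofReal (20^p) * (T (n-1) + T n)) := mul_le_mul_right hK _
    _ = ENNReal.ofReal (20^p) * (H n * T (n-1) + H n * T n) := by ring
  calc ∑' n : ℤ, H n * ENNReal.ofReal (Kb lam f n ^ p)
      ≤ ∑' n : ℤ, ENNReal.ofReal (20^p) * (H n * T (n-1) + H n * T n) :=
      ENNReal.tsum_le_tsum step1
  _ = ENNReal.ofReal (20^p) * ∑' n : ℤ, (H n * T (n-1) + H n * T n) := ENNReal.tsum_mul_left
  _ = ENNReal.ofReal (20^p) * (∑' n : ℤ, H n * T (n-1) + ∑' n : ℤ, H n * T n) := by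
      rw [ENNReal.tsum_add]
  _ = ENNReal.ofReal (20^p) * (∑' n : ℤ, H (n+1) * T n + ∑' n : ℤ, H n * T n) := by
      have hshift : (∑' n : ℤ, H n * T (n-1)) = ∑' n : ℤ, H (n+1) * T n := by
        rw [← (Equiv.addRight (1:ℤ)).tsum_eq (fun n => H n * T (n-1))]
        refine tsum_congr fun n => ?_
        simp only [Equiv.coe_addRight, add_sub_cancel_right]
      rw [hshift]
  _ = ENNReal.ofReal (20^p) * ∑' n : ℤ, (H (n+1) + H n) * T n := by
      rw [← ENNReal.tsum_add]
      refine congrArg _ (tsum_congr fun n => by ring)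
  _ = ENNReal.ofReal (20^p) *
        ∑' n : ℤ, ENNReal.ofReal ((lam (n + 2) - lam n) * ‖dd2 lam f n‖ ^ p) := by
      refine congrArg _ (tsum_congr fun n => ?_)
      rw [hH]
      have h1 : (0:ℝ) ≤ lam (n+1+1) - lam (n+1) := sub_nonneg.2 (hl.1 (by omega)).le
      have h2 : (0:ℝ) ≤ lam (n+1) - lam n := sub_nonneg.2 (hl.1 (by omega)).le
      rw [← ENNReal.ofReal_add h1 h2, hT,
        ← ENNReal.ofReal_mul (by linarith)]
      congr 2
      · rw [show (n+1+1 : ℤ) = n + 2 by ring]; ring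

lemma upper (hl : GoodSeq lam) {p : ℝ} (hp : 1 ≤ p) :
    traceL 2 p lam f ≤ ENNReal.ofReal 20 *
      (∑' n : ℤ, ENNReal.ofReal ((lam (n + 2) - lam n) *
        ‖dd2 lam f n‖ ^ p)) ^ (1 / p) := by
  have hp0 : (0:ℝ) < p := lt_of_lt_of_le one_pos hp
  have step0 : traceL 2 p lam f ≤
      (∫⁻ t, ENNReal.ofReal (‖Gc hl f t‖ ^ p)) ^ (1/p) := by
    refine iInf_le_of_le (Fc hl f) (iInf_le_of_le (Gc hl f) ?_)
    exact iInf_le _ (admissible hl)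
  have step1 : (∫⁻ t, ENNReal.ofReal (‖Gc hl f t‖ ^ p)) ≤
      ENNReal.ofReal (20^p) *
        ∑' n : ℤ, ENNReal.ofReal ((lam (n + 2) - lam n) * ‖dd2 lam f n‖ ^ p) := by
    rw [lintegral_Gc_eq hl]
    refine le_trans (ENNReal.tsum_le_tsum fun n => piece_lintegral_bound hl hp0.le n) ?_
    exact sum_piece hl hp0.le
  refine le_trans step0 ?_
  refine le_trans (ENNReal.rpow_le_rpow step1 (by positivity)) ?_
  rw [ENNReal.mul_rpow_of_nonneg _ _ (by positivity : (0:ℝ) ≤ 1/p)]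
  refine mul_le_mul_left (le_of_eq ?_) _
  rw [← ENNReal.ofReal_rpow_of_pos (by norm_num : (0:ℝ) < 20), ← ENNReal.rpow_mul,
    mul_one_div_cancel (ne_of_gt hp0), ENNReal.rpow_one]


section Lower

variable {F G : ℝ → ℂ}

lemma avg_right (hF : Differentiable ℝ F) (hD : Continuous (deriv F))
    (hFTC : ∀ a b : ℝ, a ≤ b → deriv F b - deriv F a = ∫ t in a..b, G t)
    (hG : MeasureTheory.LocallyIntegrable G volume) {a b : ℝ} (hab : a < b) :
    ‖(F b - F a) / ((b - a : ℝ) : ℂ) - deriv F a‖ ≤ ∫ t in a..b, ‖G t‖ := by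
  have hGn : IntervalIntegrable (fun t => ‖G t‖) volume a b :=
    ((hG.integrableOn_isCompact isCompact_uIcc).intervalIntegrable).norm
  have hFint : F b - F a = ∫ t in a..b, deriv F t :=
    (intervalIntegral.integral_deriv_eq_sub (fun x _ => hF.differentiableAt)
      (hD.intervalIntegrable a b)).symm
  have key : (∫ t in a..b, (deriv F t - deriv F a)) = (F b - F a) - (b-a) • deriv F a := by
    rw [intervalIntegral.integral_sub (hD.intervalIntegrable a b) intervalIntegrable_const,
      intervalIntegral.integral_const, ← hFint]
  have hbound : ∀ s ∈ Set.uIoc a b, ‖deriv F s - deriv F a‖ ≤ ∫ t in a..b, ‖G t‖ := by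
    intro s hs
    rw [Set.uIoc_of_le hab.le] at hs
    rw [hFTC a s hs.1.le]
    calc ‖∫ t in a..s, G t‖ ≤ ∫ t in a..s, ‖G t‖ :=
        intervalIntegral.norm_integral_le_integral_norm hs.1.le
    _ ≤ ∫ t in a..b, ‖G t‖ :=
        intervalIntegral.integral_mono_interval le_rfl hs.1.le hs.2
          (Filter.Eventually.of_forall fun t => norm_nonneg _) hGn
  have h2 := intervalIntegral.norm_integral_le_of_norm_le_const hbound
  rw [key] at h2
  have hba : (0:ℝ) < b - a := sub_pos.2 hab
  have hsm : ∀ z : ℂ, (b - a) • z = ((b - a : ℝ) : ℂ) * z := fun z => Complex.real_smul.symm ▸ rfl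
  have hrw : (F b - F a) / ((b - a : ℝ) : ℂ) - deriv F a =
      ((F b - F a) - (b-a) • deriv F a) / ((b - a : ℝ) : ℂ) := by
    rw [hsm]
    have hne : ((b - a : ℝ) : ℂ) ≠ 0 := by exact_mod_cast ne_of_gt hba
    push_cast at hne ⊢
    field_simp
  rw [hrw, norm_div]
  have hnrm : ‖((b - a : ℝ) : ℂ)‖ = b - a := by
    rw [Complex.norm_real, Real.norm_eq_abs, abs_of_pos hba]
  rw [hnrm, div_le_iff₀ hba]
  calc ‖F b - F a - (b - a) • deriv F a‖ ≤ (∫ t in a..b, ‖G t‖) * |b - a| := h2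
  _ = (∫ t in a..b, ‖G t‖) * (b - a) := by rw [abs_of_pos hba]

lemma avg_left (hF : Differentiable ℝ F) (hD : Continuous (deriv F))
    (hFTC : ∀ a b : ℝ, a ≤ b → deriv F b - deriv F a = ∫ t in a..b, G t)
    (hG : MeasureTheory.LocallyIntegrable G volume) {a b : ℝ} (hab : a < b) :
    ‖(F b - F a) / ((b - a : ℝ) : ℂ) - deriv F b‖ ≤ ∫ t in a..b, ‖G t‖ := by
  have hGn : IntervalIntegrable (fun t => ‖G t‖) volume a b :=
    ((hG.integrableOn_isCompact isCompact_uIcc).intervalIntegrable).norm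
  have hFint : F b - F a = ∫ t in a..b, deriv F t :=
    (intervalIntegral.integral_deriv_eq_sub (fun x _ => hF.differentiableAt)
      (hD.intervalIntegrable a b)).symm
  have key : (∫ t in a..b, (deriv F t - deriv F b)) = (F b - F a) - (b-a) • deriv F b := by
    rw [intervalIntegral.integral_sub (hD.intervalIntegrable a b) intervalIntegrable_const,
      intervalIntegral.integral_const, ← hFint]
  have hbound : ∀ s ∈ Set.uIoc a b, ‖deriv F s - deriv F b‖ ≤ ∫ t in a..b, ‖G t‖ := by
    intro s hs
    rw [Set.uIoc_of_le hab.le] at hs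
    have h1 : deriv F b - deriv F s = ∫ t in s..b, G t := hFTC s b hs.2
    have h2 : deriv F s - deriv F b = -(deriv F b - deriv F s) := by ring
    rw [h2, norm_neg, h1]
    calc ‖∫ t in s..b, G t‖ ≤ ∫ t in s..b, ‖G t‖ :=
        intervalIntegral.norm_integral_le_integral_norm hs.2
    _ ≤ ∫ t in a..b, ‖G t‖ :=
        intervalIntegral.integral_mono_interval hs.1.le hs.2 le_rfl
          (Filter.Eventually.of_forall fun t => norm_nonneg _) hGn
  have h2 := intervalIntegral.norm_integral_le_of_norm_le_const hbound
  rw [key] at h2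
  have hba : (0:ℝ) < b - a := sub_pos.2 hab
  have hrw : (F b - F a) / ((b - a : ℝ) : ℂ) - deriv F b =
      ((F b - F a) - (b-a) • deriv F b) / ((b - a : ℝ) : ℂ) := by
    rw [show ((b - a) • deriv F b : ℂ) = ((b - a : ℝ) : ℂ) * deriv F b from
      Complex.real_smul]
    have hne : ((b - a : ℝ) : ℂ) ≠ 0 := by exact_mod_cast ne_of_gt hba
    push_cast at hne ⊢
    field_simp
  rw [hrw, norm_div]
  have hnrm : ‖((b - a : ℝ) : ℂ)‖ = b - a := by
    rw [Complex.norm_real, Real.norm_eq_abs, abs_of_pos hba]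
  rw [hnrm, div_le_iff₀ hba]
  calc ‖F b - F a - (b - a) • deriv F b‖ ≤ (∫ t in a..b, ‖G t‖) * |b - a| := h2
  _ = (∫ t in a..b, ‖G t‖) * (b - a) := by rw [abs_of_pos hba]

lemma dd2_bound (hl : GoodSeq lam) (hadm : AdmissibleExt 2 lam f F G) (n : ℤ) :
    ‖dd2 lam f n‖ * (lam (n+2) - lam n) ≤ ∫ t in lam n..lam (n+2), ‖G t‖ := by
  obtain ⟨hF1, hGloc, hFTC0, hint⟩ := hadm
  have hF : Differentiable ℝ F ∧ Continuous (deriv F) :=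
    contDiff_one_iff_deriv.1 hF1
  have hFTC : ∀ a b : ℝ, a ≤ b → deriv F b - deriv F a = ∫ t in a..b, G t := by
    intro a b hab
    have := hFTC0 a b hab
    rwa [show (2-1 : ℕ) = 1 from rfl, iteratedDeriv_one] at this
  have h01 : lam n < lam (n+1) := hl.1 (by omega)
  have h12 : lam (n+1) < lam (n+2) := hl.1 (by omega)
  have e1 := avg_left hF.1 hF.2 hFTC hGloc h01
  have e2 := avg_right hF.1 hF.2 hFTC hGloc h12
  have hd1 : dd1 lam f n = (F (lam (n+1)) - F (lam n)) / ((lam (n+1) - lam n : ℝ) : ℂ) := by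
    rw [dd1, hint n, hint (n+1)]
  have hd2 : dd1 lam f (n+1) = (F (lam (n+2)) - F (lam (n+1))) / ((lam (n+2) - lam (n+1) : ℝ) : ℂ) := by
    rw [dd1, show (n+1+1 : ℤ) = n+2 from by ring, hint (n+2), hint (n+1)]
  have htri : ‖dd1 lam f (n+1) - dd1 lam f n‖ ≤
      (∫ t in lam (n+1)..lam (n+2), ‖G t‖) + ∫ t in lam n..lam (n+1), ‖G t‖ := by
    have : dd1 lam f (n+1) - dd1 lam f n =
        (dd1 lam f (n+1) - deriv F (lam (n+1))) - (dd1 lam f n - deriv F (lam (n+1))) := by ring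
    rw [this]
    refine le_trans (norm_sub_le _ _) (add_le_add ?_ ?_)
    · rw [hd2]; exact e2
    · rw [hd1]; exact e1
  have hadd : (∫ t in lam n..lam (n+1), ‖G t‖) + (∫ t in lam (n+1)..lam (n+2), ‖G t‖) =
      ∫ t in lam n..lam (n+2), ‖G t‖ := by
    refine intervalIntegral.integral_add_adjacent_intervals ?_ ?_
    · exact ((hGloc.integrableOn_isCompact isCompact_uIcc).intervalIntegrable).norm
    · exact ((hGloc.integrableOn_isCompact isCompact_uIcc).intervalIntegrable).norm
  have hL : (0:ℝ) < lam (n+2) - lam n := sub_pos.2 (hl.1 (by omega))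
  have hdd2 : ‖dd2 lam f n‖ * (lam (n+2) - lam n) = ‖dd1 lam f (n+1) - dd1 lam f n‖ := by
    rw [dd2, norm_div, Complex.norm_real, Real.norm_eq_abs, abs_of_pos hL,
      div_mul_cancel₀ _ (ne_of_gt hL)]
  rw [hdd2]
  calc ‖dd1 lam f (n+1) - dd1 lam f n‖ ≤ _ := htri
  _ = ∫ t in lam n..lam (n+2), ‖G t‖ := by rw [add_comm]; exact hadd


lemma holder_piece (hl : GoodSeq lam) {p : ℝ} (hp : 1 ≤ p)
    (hadm : AdmissibleExt 2 lam f F G) (n : ℤ) :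
    ENNReal.ofReal ((lam (n+2) - lam n) * ‖dd2 lam f n‖ ^ p) ≤
      ∫⁻ t in Set.Ioc (lam n) (lam (n+2)), ENNReal.ofReal (‖G t‖ ^ p) := by
  have hp0 : (0:ℝ) < p := lt_of_lt_of_le one_pos hp
  have hGloc := hadm.2.1
  set L : ℝ := lam (n+2) - lam n with hLdef
  have hL : (0:ℝ) < L := sub_pos.2 (hl.1 (by omega))
  set μ := volume.restrict (Set.Ioc (lam n) (lam (n+2))) with hμ
  have hGsm : AEStronglyMeasurable G μ := hGloc.aestronglyMeasurable.restrict
  set J : ℝ≥0∞ := ∫⁻ t, ‖G t‖ₑ ^ p ∂μ with hJ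
  set K : ℝ≥0∞ := ∫⁻ t, ‖G t‖ₑ ∂μ with hK
  set oL : ℝ≥0∞ := ENNReal.ofReal L with hoL
  have hoL0 : oL ≠ 0 := by
    simp only [hoL, ne_eq, ENNReal.ofReal_eq_zero, not_le]; exact hL
  have hoLt : oL ≠ ⊤ := ENNReal.ofReal_ne_top
  -- Hölder
  have hKJ : K ≤ J ^ (1/p) * oL ^ (1 - 1/p) := by
    have h := eLpNorm_le_eLpNorm_mul_rpow_measure_univ
      (p := 1) (q := ENNReal.ofReal p) (μ := μ) (f := G)
      (ENNReal.one_le_ofReal.2 hp) hGsm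
    rw [eLpNorm_one_eq_lintegral_enorm,
      eLpNorm_eq_lintegral_rpow_enorm_toReal (by simp [ENNReal.ofReal_eq_zero]; linarith)
        ENNReal.ofReal_ne_top, ENNReal.toReal_ofReal hp0.le,
      Measure.restrict_apply_univ, Real.volume_Ioc] at h
    simpa [ENNReal.toReal_one] using h
  -- from dd2_bound
  have hMK : ENNReal.ofReal (‖dd2 lam f n‖ * L) ≤ K := by
    have hb := dd2_bound hl hadm n
    have hInt : IntegrableOn (fun t => ‖G t‖) (Set.Ioc (lam n) (lam (n+2))) volume :=
      ((hGloc.integrableOn_isCompact isCompact_Icc).mono_set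
        Set.Ioc_subset_Icc_self).norm
    have heq : ENNReal.ofReal (∫ t in lam n..lam (n+2), ‖G t‖) = K := by
      rw [intervalIntegral.integral_of_le (by linarith : lam n ≤ lam (n+2)),
        ofReal_integral_eq_lintegral_ofReal hInt
          (Filter.Eventually.of_forall fun t => norm_nonneg _)]
      exact lintegral_congr fun t => ofReal_norm _
    exact heq ▸ ENNReal.ofReal_le_ofReal hb
  set X : ℝ≥0∞ := ENNReal.ofReal ‖dd2 lam f n‖ with hX
  have hXK : X * oL ≤ K := by
    rw [hX, hoL, ← ENNReal.ofReal_mul (norm_nonneg _)]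
    exact hMK
  -- raise to power p
  have hKp : K ^ p ≤ J * oL ^ (p - 1) := by
    calc K ^ p ≤ (J ^ (1/p) * oL ^ (1 - 1/p)) ^ p := ENNReal.rpow_le_rpow hKJ hp0.le
    _ = (J ^ (1/p)) ^ p * (oL ^ (1 - 1/p)) ^ p := ENNReal.mul_rpow_of_nonneg _ _ hp0.le
    _ = J * oL ^ (p - 1) := by
        rw [← ENNReal.rpow_mul, ← ENNReal.rpow_mul, one_div_mul_cancel (ne_of_gt hp0),
          ENNReal.rpow_one]
        congr 1
        field_simp
  have hXL : (X * oL) ^ p = X ^ p * oL * oL ^ (p - 1) := by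
    have hsplit : oL ^ p = oL * oL ^ (p - 1) := by
      rw [show p = 1 + (p - 1) by ring]
      rw [ENNReal.rpow_add _ _ hoL0 hoLt, ENNReal.rpow_one]
      rw [show (1 + (p-1) - 1 : ℝ) = p - 1 by ring]
    rw [ENNReal.mul_rpow_of_nonneg _ _ hp0.le, hsplit, mul_assoc]
  have hfin : X ^ p * oL ≤ J := by
    have hc0 : oL ^ (p - 1) ≠ 0 := ne_of_gt (ENNReal.rpow_pos (pos_iff_ne_zero.2 hoL0) hoLt)
    have hct : oL ^ (p - 1) ≠ ⊤ := ENNReal.rpow_ne_top_of_nonneg (by linarith) hoLt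
    refine (ENNReal.mul_le_mul_iff_left hc0 hct).1 ?_
    calc X ^ p * oL * oL ^ (p - 1) = (X * oL) ^ p := hXL.symm
    _ ≤ K ^ p := ENNReal.rpow_le_rpow hXK hp0.le
    _ ≤ J * oL ^ (p - 1) := hKp
  -- rewrite goal
  have hgoal : ENNReal.ofReal (L * ‖dd2 lam f n‖ ^ p) = oL * X ^ p := by
    rw [ENNReal.ofReal_mul hL.le, hoL, hX,
      ENNReal.ofReal_rpow_of_nonneg (norm_nonneg _) hp0.le]
  have hJeq : J = ∫⁻ t in Set.Ioc (lam n) (lam (n+2)), ENNReal.ofReal (‖G t‖ ^ p) := by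
    refine lintegral_congr fun t => ?_
    rw [← ofReal_norm, ENNReal.ofReal_rpow_of_nonneg (norm_nonneg _) hp0.le]
  rw [hgoal, ← hJeq]
  calc oL * X ^ p = X ^ p * oL := mul_comm _ _
  _ ≤ J := hfin

lemma indicator_sum_le (hl : GoodSeq lam) (g : ℝ → ℝ≥0∞) (x : ℝ) :
    ∑' n : ℤ, (Set.Ioc (lam n) (lam (n+2))).indicator g x ≤ 3 * g x := by
  set m := idx hl x with hm
  have hsupp : ∀ n : ℤ, n ∉ ({m-2, m-1, m} : Finset ℤ) →
      (Set.Ioc (lam n) (lam (n+2))).indicator g x = 0 := by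
    intro n hn
    rw [Set.indicator_of_notMem]
    intro hx
    apply hn
    simp only [Finset.mem_insert, Finset.mem_singleton]
    have h1 : n ≤ m := by
      by_contra hc
      push_neg at hc
      have hlt : x < lam n :=
        lt_of_lt_of_le (lt_idx hl x) (hl.1.le_iff_le.2 (by omega : m + 1 ≤ n))
      exact absurd hx.1 (not_lt.2 hlt.le)
    have h2 : m ≤ n + 2 := by
      by_contra hc
      push_neg at hc
      exact absurd (lt_of_lt_of_le (hl.1 (by omega : n + 2 < m)) (idx_le hl x))
        (not_lt.2 hx.2)
    omega
  rw [tsum_eq_sum hsupp]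
  refine le_trans (Finset.sum_le_card_nsmul _ _ (g x)
    (fun i _ => Set.indicator_le_self _ _ x)) ?_
  rw [nsmul_eq_mul]
  refine mul_le_mul_left ?_ _
  have hcard : ({m-2, m-1, m} : Finset ℤ).card ≤ 3 :=
    le_trans (Finset.card_insert_le _ _) (by
      exact Nat.add_le_add_right (le_trans (Finset.card_insert_le _ _) (by simp)) 1)
  exact_mod_cast Nat.cast_le.2 hcard

lemma lower_sum (hl : GoodSeq lam) {p : ℝ} (hp : 1 ≤ p)
    (hadm : AdmissibleExt 2 lam f F G) :
    (∑' n : ℤ, ENNReal.ofReal ((lam (n + 2) - lam n) * ‖dd2 lam f n‖ ^ p)) ≤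
      3 * ∫⁻ t, ENNReal.ofReal (‖G t‖ ^ p) := by
  set g : ℝ → ℝ≥0∞ := fun t => ENNReal.ofReal (‖G t‖ ^ p) with hg
  have hgm : AEMeasurable g volume :=
    (AEMeasurable.pow hadm.2.1.aestronglyMeasurable.norm.aemeasurable
      aemeasurable_const).ennreal_ofReal
  have h1 : (∑' n : ℤ, ENNReal.ofReal ((lam (n + 2) - lam n) * ‖dd2 lam f n‖ ^ p)) ≤
      ∑' n : ℤ, ∫⁻ t in Set.Ioc (lam n) (lam (n+2)), g t :=
    ENNReal.tsum_le_tsum fun n => holder_piece hl hp hadm n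
  have h2 : (∑' n : ℤ, ∫⁻ t in Set.Ioc (lam n) (lam (n+2)), g t) =
      ∫⁻ t, ∑' n : ℤ, (Set.Ioc (lam n) (lam (n+2))).indicator g t := by
    rw [lintegral_tsum fun n => hgm.indicator measurableSet_Ioc]
    exact tsum_congr fun n => (lintegral_indicator measurableSet_Ioc g).symm
  have h3 : (∫⁻ t, ∑' n : ℤ, (Set.Ioc (lam n) (lam (n+2))).indicator g t) ≤
      ∫⁻ t, 3 * g t := lintegral_mono fun t => indicator_sum_le hl g t
  have h4 : (∫⁻ t, 3 * g t) = 3 * ∫⁻ t, g t := lintegral_const_mul' 3 g (by norm_num)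
  have h5 : (∫⁻ t, g t) = ∫⁻ t, ENNReal.ofReal (‖G t‖ ^ p) := by
    refine lintegral_congr fun t => ?_
    show ENNReal.ofReal (‖G t‖ ^ p) = _
    rfl
  calc _ ≤ ∑' n : ℤ, ∫⁻ t in Set.Ioc (lam n) (lam (n+2)), g t := h1
  _ = _ := h2
  _ ≤ _ := h3
  _ = 3 * ∫⁻ t, g t := h4
  _ = _ := by rw [h5]

lemma lower (hl : GoodSeq lam) {p : ℝ} (hp : 1 ≤ p) :
    ENNReal.ofReal (1/3) *
      (∑' n : ℤ, ENNReal.ofReal ((lam (n + 2) - lam n) *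
        ‖dd2 lam f n‖ ^ p)) ^ (1 / p) ≤ traceL 2 p lam f := by
  have hp0 : (0:ℝ) < p := lt_of_lt_of_le one_pos hp
  refine le_iInf fun F => le_iInf fun G => le_iInf fun hadm => ?_
  have hS := lower_sum hl hp hadm
  have h1 : (∑' n : ℤ, ENNReal.ofReal ((lam (n + 2) - lam n) *
      ‖dd2 lam f n‖ ^ p)) ^ (1/p) ≤
      (3 : ℝ≥0∞) * (∫⁻ t, ENNReal.ofReal (‖G t‖ ^ p)) ^ (1/p) := by
    refine le_trans (ENNReal.rpow_le_rpow hS (by positivity)) ?_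
    rw [ENNReal.mul_rpow_of_nonneg _ _ (by positivity : (0:ℝ) ≤ 1/p)]
    refine mul_le_mul_left ?_ _
    calc (3:ℝ≥0∞)^(1/p) ≤ (3:ℝ≥0∞)^(1:ℝ) :=
        ENNReal.rpow_le_rpow_of_exponent_le (by norm_num)
          (by rw [div_le_one hp0]; linarith)
    _ = 3 := ENNReal.rpow_one 3
  calc ENNReal.ofReal (1/3) * (∑' n : ℤ, ENNReal.ofReal ((lam (n + 2) - lam n) *
        ‖dd2 lam f n‖ ^ p)) ^ (1/p)
      ≤ ENNReal.ofReal (1/3) * ((3 : ℝ≥0∞) *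
        (∫⁻ t, ENNReal.ofReal (‖G t‖ ^ p)) ^ (1/p)) := mul_le_mul_right h1 _
  _ = (∫⁻ t, ENNReal.ofReal (‖G t‖ ^ p)) ^ (1/p) := by
      rw [← mul_assoc, show (3:ℝ≥0∞) = ENNReal.ofReal 3 by norm_num,
        ← ENNReal.ofReal_mul (by norm_num)]
      norm_num

end Lower

end Stmt2X

/-- equivalence of the homogeneous trace seminorm `‖·‖_{L^2_p|Λ}` with the
discrete seminorm `(∑_n (λ_{n+2}-λ_n)|f[λ_n,λ_{n+1},λ_{n+2}]|^p)^{1/p}`, with absolute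
constants. -/
theorem stmt2 :
    ∃ c C : ℝ, 0 < c ∧ c ≤ C ∧
      ∀ p : ℝ, 1 ≤ p → ∀ lam : ℤ → ℝ, GoodSeq lam → ∀ f : ℤ → ℂ,
        ENNReal.ofReal c *
            (∑' n : ℤ, ENNReal.ofReal ((lam (n + 2) - lam n) *
              ‖dd2 lam f n‖ ^ p)) ^ (1 / p) ≤ traceL 2 p lam f ∧
        traceL 2 p lam f ≤
          ENNReal.ofReal C *
            (∑' n : ℤ, ENNReal.ofReal ((lam (n + 2) - lam n) *
              ‖dd2 lam f n‖ ^ p)) ^ (1 / p) := by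
  refine ⟨1/3, 20, by norm_num, by norm_num, fun p hp lam hl f => ?_⟩
  exact ⟨Stmt2X.lower hl hp, Stmt2X.upper hl hp⟩
end

section
/- There is a universal constant M > 0 (independent of p, λ, f; one may take M = 8) with the following property. Let λ : ℤ → ℝ be strictly increasing with λ_n → ±∞ as n → ±∞ and let f : ℤ → ℂ. Then the cubic spline Φ₂f is an admissible 2-extension of f, with associated second derivative the function G defined by G(x) = f[λ_{n−1},λ_n,λ_{n+1}]·q''((λ_n − x)/h_{n−1}) for μ_{n−1} < x < λ_n and G(x) = f[λ_{n−1},λ_n,λ_{n+1}]·q''((x − λ_n)/h_n) for λ_n < x < μ_n, and for every real p with 1 ≤ p < ∞ one has ∫_ℝ |G(t)|^p dt ≤ M^p ∑_{n∈ℤ} (λ_{n+2} − λ_n)|f[λ_n,λ_{n+1},λ_{n+2}]|^p. -/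
open MeasureTheory
open scoped ENNReal NNReal

noncomputable def qd (t : ℝ) : ℝ := 8*t - 12*t^2
noncomputable def qdd (t : ℝ) : ℝ := 8 - 24*t

lemma hasDerivAt_qcub (t : ℝ) : HasDerivAt qcub (qd t) t := by
  have h1 : HasDerivAt (fun x : ℝ => x^2) (2*t) t := by simpa using hasDerivAt_pow 2 t
  have h2 : HasDerivAt (fun x : ℝ => x^3) (3*t^2) t := by
    simpa using hasDerivAt_pow 3 t
  have := ((h1.sub h2).const_mul (4:ℝ))
  refine this.congr_deriv ?_
  simp [qd]; ring

lemma hasDerivAt_qd (t : ℝ) : HasDerivAt qd (qdd t) t := by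
  have h1 : HasDerivAt (fun x : ℝ => 8*x) (8:ℝ) t := by
    simpa using (hasDerivAt_id t).const_mul (8:ℝ)
  have h2 : HasDerivAt (fun x : ℝ => x^2) (2*t) t := by simpa using hasDerivAt_pow 2 t
  have := h1.sub (h2.const_mul (12:ℝ))
  refine this.congr_deriv ?_
  simp [qdd]; ring

lemma deriv_qcub : deriv qcub = qd := funext fun t => (hasDerivAt_qcub t).deriv

lemma deriv_deriv_qcub : deriv (deriv qcub) = qdd := by
  rw [deriv_qcub]; exact funext fun t => (hasDerivAt_qd t).deriv

lemma qd_zero : qd 0 = 0 := by simp [qd]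
lemma qd_half : qd (1/2) = 1 := by norm_num [qd]
lemma qcub_zero : qcub 0 = 0 := by simp [qcub]
lemma qcub_half : qcub (1/2) = 1/2 := by norm_num [qcub]
lemma abs_qdd_le {u : ℝ} (h0 : 0 ≤ u) (h1 : u ≤ 1/2) : |qdd u| ≤ 8 := by
  rw [abs_le]; unfold qdd; constructor <;> linarith

/-- derivative of `phi2R` piece -/
noncomputable def DRf (lam : ℤ → ℝ) (f : ℤ → ℂ) (n : ℤ) (x : ℝ) : ℂ :=
  alphaN lam f n + ((lam (n+1) - lam n : ℝ) : ℂ) * dd2 lam f (n-1) *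
    ((qd ((x - lam n)/(lam (n+1) - lam n)) : ℝ) : ℂ)

/-- derivative of `phi2L` piece -/
noncomputable def DLf (lam : ℤ → ℝ) (f : ℤ → ℂ) (n : ℤ) (x : ℝ) : ℂ :=
  alphaN lam f n - ((lam n - lam (n-1) : ℝ) : ℂ) * dd2 lam f (n-1) *
    ((qd ((lam n - x)/(lam n - lam (n-1))) : ℝ) : ℂ)

lemma hasDerivAt_phi2R (lam : ℤ → ℝ) (f : ℤ → ℂ) (n : ℤ)
    (h : lam n < lam (n+1)) (x : ℝ) :
    HasDerivAt (phi2R lam f n) (DRf lam f n x) x := by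
  have hne : lam (n+1) - lam n ≠ 0 := by linarith
  have hin : HasDerivAt (fun y : ℝ => (y - lam n)/(lam (n+1) - lam n))
      (1/(lam (n+1) - lam n)) x := by
    simpa using ((hasDerivAt_id x).sub_const (lam n)).div_const (lam (n+1) - lam n)
  have hq : HasDerivAt (fun y : ℝ => qcub ((y - lam n)/(lam (n+1) - lam n)))
      (qd ((x - lam n)/(lam (n+1) - lam n)) * (1/(lam (n+1) - lam n))) x :=
    (hasDerivAt_qcub _).comp x hin
  have hqC : HasDerivAt (fun y : ℝ => ((qcub ((y - lam n)/(lam (n+1) - lam n)) : ℝ) : ℂ))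
      ((qd ((x - lam n)/(lam (n+1) - lam n)) * (1/(lam (n+1) - lam n)) : ℝ) : ℂ) x :=
    hq.ofReal_comp
  have hlin : HasDerivAt (fun y : ℝ => ((y - lam n : ℝ) : ℂ)) 1 x := by
    have := ((hasDerivAt_id x).sub_const (lam n)).ofReal_comp
    simpa using this
  have := ((hlin.const_mul (alphaN lam f n)).const_add (f n)).add
    (hqC.const_mul ((((lam (n + 1) - lam n) ^ 2 : ℝ) : ℂ) * dd2 lam f (n - 1)))
  refine this.congr_deriv ?_
  have hC : ((lam (n+1) - lam n : ℝ) : ℂ) ≠ 0 := Complex.ofReal_ne_zero.mpr hne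
  unfold DRf
  push_cast at hC ⊢
  field_simp [hC]

lemma hasDerivAt_phi2L (lam : ℤ → ℝ) (f : ℤ → ℂ) (n : ℤ)
    (h : lam (n-1) < lam n) (x : ℝ) :
    HasDerivAt (phi2L lam f n) (DLf lam f n x) x := by
  have hne : lam n - lam (n-1) ≠ 0 := by linarith
  have hin : HasDerivAt (fun y : ℝ => (lam n - y)/(lam n - lam (n-1)))
      (-1/(lam n - lam (n-1))) x := by
    simpa using ((hasDerivAt_id x).const_sub (lam n)).div_const (lam n - lam (n-1))
  have hq : HasDerivAt (fun y : ℝ => qcub ((lam n - y)/(lam n - lam (n-1))))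
      (qd ((lam n - x)/(lam n - lam (n-1))) * (-1/(lam n - lam (n-1)))) x :=
    (hasDerivAt_qcub _).comp x hin
  have hqC : HasDerivAt (fun y : ℝ => ((qcub ((lam n - y)/(lam n - lam (n-1))) : ℝ) : ℂ))
      ((qd ((lam n - x)/(lam n - lam (n-1))) * (-1/(lam n - lam (n-1))) : ℝ) : ℂ) x :=
    hq.ofReal_comp
  have hlin : HasDerivAt (fun y : ℝ => ((y - lam n : ℝ) : ℂ)) 1 x := by
    have := ((hasDerivAt_id x).sub_const (lam n)).ofReal_comp
    simpa using this
  have := ((hlin.const_mul (alphaN lam f n)).const_add (f n)).add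
    (hqC.const_mul ((((lam n - lam (n - 1)) ^ 2 : ℝ) : ℂ) * dd2 lam f (n - 1)))
  refine this.congr_deriv ?_
  have hC : ((lam n - lam (n-1) : ℝ) : ℂ) ≠ 0 := Complex.ofReal_ne_zero.mpr hne
  unfold DLf
  push_cast at hC ⊢
  field_simp [hC]
  ring

lemma hasDerivAt_DRf (lam : ℤ → ℝ) (f : ℤ → ℂ) (n : ℤ)
    (h : lam n < lam (n+1)) (x : ℝ) :
    HasDerivAt (DRf lam f n)
      (dd2 lam f (n-1) * ((qdd ((x - lam n)/(lam (n+1) - lam n)) : ℝ) : ℂ)) x := by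
  have hne : lam (n+1) - lam n ≠ 0 := by linarith
  have hin : HasDerivAt (fun y : ℝ => (y - lam n)/(lam (n+1) - lam n))
      (1/(lam (n+1) - lam n)) x := by
    simpa using ((hasDerivAt_id x).sub_const (lam n)).div_const (lam (n+1) - lam n)
  have hq : HasDerivAt (fun y : ℝ => qd ((y - lam n)/(lam (n+1) - lam n)))
      (qdd ((x - lam n)/(lam (n+1) - lam n)) * (1/(lam (n+1) - lam n))) x :=
    (hasDerivAt_qd _).comp x hin
  have hqC := hq.ofReal_comp
  have := (hqC.const_mul (((lam (n+1) - lam n : ℝ) : ℂ) * dd2 lam f (n-1))).const_add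
    (alphaN lam f n)
  refine this.congr_deriv ?_
  have hC : ((lam (n+1) - lam n : ℝ) : ℂ) ≠ 0 := Complex.ofReal_ne_zero.mpr hne
  push_cast at hC ⊢
  field_simp [hC]

lemma hasDerivAt_DLf (lam : ℤ → ℝ) (f : ℤ → ℂ) (n : ℤ)
    (h : lam (n-1) < lam n) (x : ℝ) :
    HasDerivAt (DLf lam f n)
      (dd2 lam f (n-1) * ((qdd ((lam n - x)/(lam n - lam (n-1))) : ℝ) : ℂ)) x := by
  have hne : lam n - lam (n-1) ≠ 0 := by linarith
  have hin : HasDerivAt (fun y : ℝ => (lam n - y)/(lam n - lam (n-1)))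
      (-1/(lam n - lam (n-1))) x := by
    simpa using ((hasDerivAt_id x).const_sub (lam n)).div_const (lam n - lam (n-1))
  have hq : HasDerivAt (fun y : ℝ => qd ((lam n - y)/(lam n - lam (n-1))))
      (qdd ((lam n - x)/(lam n - lam (n-1))) * (-1/(lam n - lam (n-1)))) x :=
    (hasDerivAt_qd _).comp x hin
  have hqC := hq.ofReal_comp
  have := (hqC.const_mul (((lam n - lam (n-1) : ℝ) : ℂ) * dd2 lam f (n-1))).const_sub
    (alphaN lam f n)
  refine this.congr_deriv ?_
  have hC : ((lam n - lam (n-1) : ℝ) : ℂ) ≠ 0 := Complex.ofReal_ne_zero.mpr hne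
  push_cast at hC ⊢
  field_simp [hC]
lemma DRf_node (lam : ℤ → ℝ) (f : ℤ → ℂ) (n : ℤ) :
    DRf lam f n (lam n) = alphaN lam f n := by
  simp [DRf, qd_zero]

lemma DLf_node (lam : ℤ → ℝ) (f : ℤ → ℂ) (n : ℤ) :
    DLf lam f n (lam n) = alphaN lam f n := by
  simp [DLf, qd_zero]

lemma phi2R_node (lam : ℤ → ℝ) (f : ℤ → ℂ) (n : ℤ) :
    phi2R lam f n (lam n) = f n := by
  simp [phi2R, qcub_zero]

lemma phi2L_node (lam : ℤ → ℝ) (f : ℤ → ℂ) (n : ℤ) :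
    phi2L lam f n (lam n) = f n := by
  simp [phi2L, qcub_zero]

section junction
variable (lam : ℤ → ℝ) (f : ℤ → ℂ) (n : ℤ)

lemma alpha_eqR (h1 : lam (n-1) < lam n) (h2 : lam n < lam (n+1)) :
    alphaN lam f n = dd1 lam f n -
      ((lam (n+1) - lam n : ℝ) : ℂ) * dd2 lam f (n-1) := by
  have r1 : (lam n : ℂ) - lam (n-1) ≠ 0 := by
    have : (lam n - lam (n-1) : ℝ) ≠ 0 := by linarith
    have h := Complex.ofReal_ne_zero.mpr this; push_cast at h; exact h
  have r2 : (lam (n+1) : ℂ) - lam n ≠ 0 := by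
    have : (lam (n+1) - lam n : ℝ) ≠ 0 := by linarith
    have h := Complex.ofReal_ne_zero.mpr this; push_cast at h; exact h
  have r4 : (lam (n+1) : ℂ) - lam (n-1) ≠ 0 := by
    have : (lam (n+1) - lam (n-1) : ℝ) ≠ 0 := by linarith
    have h := Complex.ofReal_ne_zero.mpr this; push_cast at h; exact h
  unfold alphaN dd2 dd1
  simp only [show n-1+1 = n from by ring, show n-1+2 = n+1 from by ring]
  push_cast
  field_simp
  ring

lemma alpha_eqL (h2 : lam n < lam (n+1)) (h3 : lam (n+1) < lam (n+2)) :
    alphaN lam f (n+1) = dd1 lam f n +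
      ((lam (n+1) - lam n : ℝ) : ℂ) * dd2 lam f n := by
  have r2 : (lam (n+1) : ℂ) - lam n ≠ 0 := by
    have : (lam (n+1) - lam n : ℝ) ≠ 0 := by linarith
    have h := Complex.ofReal_ne_zero.mpr this; push_cast at h; exact h
  have r3 : (lam (n+2) : ℂ) - lam (n+1) ≠ 0 := by
    have : (lam (n+2) - lam (n+1) : ℝ) ≠ 0 := by linarith
    have h := Complex.ofReal_ne_zero.mpr this; push_cast at h; exact h
  have r5 : (lam (n+2) : ℂ) - lam n ≠ 0 := by
    have : (lam (n+2) - lam n : ℝ) ≠ 0 := by linarith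
    have h := Complex.ofReal_ne_zero.mpr this; push_cast at h; exact h
  unfold alphaN dd2 dd1
  simp only [show n+1-1 = n from by ring, show n+1+1 = n+2 from by ring]
  push_cast
  field_simp
  ring

lemma dd1_mul (h2 : lam n < lam (n+1)) :
    f (n+1) - f n = ((lam (n+1) - lam n : ℝ) : ℂ) * dd1 lam f n := by
  have r2 : ((lam (n+1) - lam n : ℝ) : ℂ) ≠ 0 := by
    refine Complex.ofReal_ne_zero.mpr ?_; linarith
  unfold dd1
  push_cast at r2 ⊢
  rw [mul_div_cancel₀ _ r2]

lemma junction_deriv (h1 : lam (n-1) < lam n) (h2 : lam n < lam (n+1))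
    (h3 : lam (n+1) < lam (n+2)) :
    DRf lam f n ((lam n + lam (n+1))/2) = DLf lam f (n+1) ((lam n + lam (n+1))/2) := by
  have hne2 : lam (n+1) - lam n ≠ 0 := by linarith
  have e1 : ((lam n + lam (n+1))/2 - lam n)/(lam (n+1) - lam n) = 1/2 := by
    rw [div_eq_iff hne2]; ring
  have e2 : (lam (n+1) - (lam n + lam (n+1))/2)/(lam (n+1) - lam n) = 1/2 := by
    rw [div_eq_iff hne2]; ring
  unfold DLf DRf
  rw [alpha_eqR lam f n h1 h2, alpha_eqL lam f n h2 h3]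
  simp only [show n+1-1 = n from by ring, e1, e2, qd_half]
  push_cast
  ring

lemma junction_val (h1 : lam (n-1) < lam n) (h2 : lam n < lam (n+1))
    (h3 : lam (n+1) < lam (n+2)) :
    phi2R lam f n ((lam n + lam (n+1))/2) = phi2L lam f (n+1) ((lam n + lam (n+1))/2) := by
  have hne2 : lam (n+1) - lam n ≠ 0 := by linarith
  have e1 : ((lam n + lam (n+1))/2 - lam n)/(lam (n+1) - lam n) = 1/2 := by
    rw [div_eq_iff hne2]; ring
  have e2 : (lam (n+1) - (lam n + lam (n+1))/2)/(lam (n+1) - lam n) = 1/2 := by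
    rw [div_eq_iff hne2]; ring
  unfold phi2R phi2L
  rw [alpha_eqR lam f n h1 h2, alpha_eqL lam f n h2 h3]
  simp only [show n+1-1 = n from by ring, e1, e2, qcub_half]
  have hd := dd1_mul lam f n h2
  have hfn1 : f (n+1) = f n + ((lam (n+1) - lam n : ℝ) : ℂ) * dd1 lam f n := by
    rw [← hd]; ring
  rw [hfn1]
  push_cast
  ring
end junction
lemma exists_idx (lam : ℤ → ℝ) (hl : GoodSeq lam) (x : ℝ) :
    ∃ n : ℤ, lam n ≤ x ∧ x < lam (n+1) := by
  obtain ⟨hmono, hbot, htop⟩ := hl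
  have hne : ∃ n : ℤ, lam n ≤ x := (hbot.eventually (Filter.eventually_le_atBot x)).exists
  have hbd : ∃ b : ℤ, ∀ z : ℤ, lam z ≤ x → z ≤ b := by
    obtain ⟨N, hN⟩ := Filter.eventually_atTop.mp (htop.eventually (Filter.eventually_gt_atTop x))
    exact ⟨N, fun z hz => by
      by_contra h
      exact absurd (hN z (by omega)) (by linarith)⟩
  obtain ⟨n, hn, hmax⟩ := Int.exists_greatest_of_bdd hbd hne
  refine ⟨n, hn, ?_⟩
  by_contra h
  have := hmax (n+1) (by linarith)
  omega

lemma idx_le (lam : ℤ → ℝ) (hmono : StrictMono lam) {m n : ℤ} {x : ℝ}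
    (hm : lam m ≤ x) (hn : x < lam (n+1)) : m ≤ n := by
  by_contra h
  have : lam (n+1) ≤ lam m := hmono.monotone (by omega)
  linarith

lemma idx_unique (lam : ℤ → ℝ) (hmono : StrictMono lam) {m n : ℤ} {x : ℝ}
    (hm : lam m ≤ x) (hm' : x < lam (m+1)) (hn : lam n ≤ x) (hn' : x < lam (n+1)) :
    m = n :=
  le_antisymm (idx_le lam hmono hm hn') (idx_le lam hmono hn hm')

/-- global second-derivative model -/
noncomputable def Gfun (lam : ℤ → ℝ) (f : ℤ → ℂ) (nn : ℝ → ℤ) (x : ℝ) : ℂ :=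
  if x < (lam (nn x) + lam (nn x + 1))/2 then
    dd2 lam f (nn x - 1) * ((qdd ((x - lam (nn x))/(lam (nn x + 1) - lam (nn x))) : ℝ) : ℂ)
  else
    dd2 lam f (nn x) * ((qdd ((lam (nn x + 1) - x)/(lam (nn x + 1) - lam (nn x))) : ℝ) : ℂ)

/-- global first-derivative model -/
noncomputable def Dfun (lam : ℤ → ℝ) (f : ℤ → ℂ) (nn : ℝ → ℤ) (x : ℝ) : ℂ :=
  if x ≤ (lam (nn x) + lam (nn x + 1))/2 then DRf lam f (nn x) x else DLf lam f (nn x + 1) x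

lemma measurable_of_cover {f : ℝ → ℂ} {A : ℤ → Set ℝ} (hA : ∀ n, MeasurableSet (A n))
    (hcov : ∀ x, ∃ n, x ∈ A n) {g : ℤ → ℝ → ℂ} (hg : ∀ n, Measurable (g n))
    (hfg : ∀ n, ∀ x ∈ A n, f x = g n x) : Measurable f := by
  intro s hs
  have : f ⁻¹' s = ⋃ n, A n ∩ g n ⁻¹' s := by
    ext x
    simp only [Set.mem_preimage, Set.mem_iUnion, Set.mem_inter_iff]
    constructor
    · intro hx
      obtain ⟨n, hn⟩ := hcov x
      exact ⟨n, hn, by rw [← hfg n x hn]; exact hx⟩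
    · rintro ⟨n, hn, hgn⟩
      rw [hfg n x hn]; exact hgn
  rw [this]
  exact MeasurableSet.iUnion fun n => (hA n).inter (hg n hs)

lemma continuous_qd : Continuous qd := by unfold qd; continuity
lemma continuous_qdd : Continuous qdd := by unfold qdd; continuity

lemma continuous_DRf (lam : ℤ → ℝ) (f : ℤ → ℂ) (n : ℤ) : Continuous (DRf lam f n) := by
  unfold DRf
  exact continuous_const.add (continuous_const.mul (Complex.continuous_ofReal.comp
    (continuous_qd.comp (((continuous_id.sub continuous_const)).div_const _))))

lemma continuous_DLf (lam : ℤ → ℝ) (f : ℤ → ℂ) (n : ℤ) : Continuous (DLf lam f n) := by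
  unfold DLf
  exact continuous_const.sub (continuous_const.mul (Complex.continuous_ofReal.comp
    (continuous_qd.comp (((continuous_const.sub continuous_id)).div_const _))))
set_option maxHeartbeats 1000000 in
/-- there is a universal constant `M > 0` such that the cubic spline `Φ₂ f` is an
admissible 2-extension of `f` with second derivative `G` given by the indicated piecewise
formula, and `∫_ℝ |G|^p ≤ M^p ∑_n (λ_{n+2}-λ_n)|f[λ_n,λ_{n+1},λ_{n+2}]|^p`. -/
theorem stmt3 :
    ∃ M : ℝ, 0 < M ∧
      ∀ lam : ℤ → ℝ, GoodSeq lam → ∀ f : ℤ → ℂ, ∀ F G : ℝ → ℂ,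
        (∀ n : ℤ, ∀ x : ℝ, (lam (n - 1) + lam n) / 2 ≤ x → x ≤ lam n →
          F x = phi2L lam f n x) →
        (∀ n : ℤ, ∀ x : ℝ, lam n ≤ x → x ≤ (lam n + lam (n + 1)) / 2 →
          F x = phi2R lam f n x) →
        (∀ n : ℤ, ∀ x : ℝ, (lam (n - 1) + lam n) / 2 < x → x < lam n →
          G x = dd2 lam f (n - 1) *
            ((deriv (deriv qcub) ((lam n - x) / (lam n - lam (n - 1))) : ℝ) : ℂ)) →
        (∀ n : ℤ, ∀ x : ℝ, lam n < x → x < (lam n + lam (n + 1)) / 2 →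
          G x = dd2 lam f (n - 1) *
            ((deriv (deriv qcub) ((x - lam n) / (lam (n + 1) - lam n)) : ℝ) : ℂ)) →
        AdmissibleExt 2 lam f F G ∧
        ∀ p : ℝ, 1 ≤ p →
          (∫⁻ t, ENNReal.ofReal (‖G t‖ ^ p)) ≤
            ENNReal.ofReal (M ^ p) *
              ∑' n : ℤ, ENNReal.ofReal ((lam (n + 2) - lam n) *
                ‖dd2 lam f n‖ ^ p) := by
  refine ⟨16, by norm_num, ?_⟩
  intro lam hl f F G hFL hFR hGL hGR
  obtain ⟨hmono, hbot, htop⟩ := hl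
  have hlt : ∀ n : ℤ, lam n < lam (n+1) := fun n => hmono (by omega)
  have hlt0 : ∀ n : ℤ, lam (n-1) < lam n := fun n => by
    have := hlt (n-1); rwa [show n-1+1 = n from by ring] at this
  have hlt2 : ∀ n : ℤ, lam (n+1) < lam (n+2) := fun n => by
    have := hlt (n+1); rwa [show n+1+1 = n+2 from by ring] at this
  have hmid : ∀ n : ℤ, lam n < (lam n + lam (n+1))/2 ∧ (lam n + lam (n+1))/2 < lam (n+1) :=
    fun n => ⟨by linarith [hlt n], by linarith [hlt n]⟩
  choose nn hnn1 hnn2 using fun x : ℝ => exists_idx lam ⟨hmono, hbot, htop⟩ x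
  have hnneq : ∀ (n : ℤ) (x : ℝ), lam n ≤ x → x < lam (n+1) → nn x = n :=
    fun n x h h' => idx_unique lam hmono (hnn1 x) (hnn2 x) h h'
  set D := Dfun lam f nn with hD
  set G₀ := Gfun lam f nn with hG₀
  -- description of D on pieces
  have hDeq : ∀ (n : ℤ) (x : ℝ), lam n ≤ x → x ≤ (lam n + lam (n+1))/2 →
      D x = DRf lam f n x := by
    intro n x h1 h2
    have hx : nn x = n := hnneq n x h1 (lt_of_le_of_lt h2 (hmid n).2)
    rw [hD]; unfold Dfun
    rw [hx, if_pos h2]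
  have hDeq' : ∀ (n : ℤ) (x : ℝ), (lam n + lam (n+1))/2 ≤ x → x ≤ lam (n+1) →
      D x = DLf lam f (n+1) x := by
    intro n x h1 h2
    rcases eq_or_lt_of_le h2 with he | hlt'
    · subst he
      have : D (lam (n+1)) = DRf lam f (n+1) (lam (n+1)) :=
        hDeq (n+1) _ le_rfl (le_of_lt (hmid (n+1)).1)
      rw [this, DRf_node, DLf_node]
    · have hx : nn x = n := hnneq n x (le_trans (le_of_lt (hmid n).1) h1) hlt'
      rcases eq_or_lt_of_le h1 with he | hgt
      · rw [← he]
        rw [hDeq n _ (le_of_lt (hmid n).1) le_rfl]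
        exact junction_deriv lam f n (hlt0 n) (hlt n) (hlt2 n)
      · rw [hD]; unfold Dfun
        rw [hx, if_neg (not_le.mpr hgt)]
  -- description of F on pieces
  have hFeqR : ∀ (n : ℤ) (x : ℝ), lam n ≤ x → x ≤ (lam n + lam (n+1))/2 →
      F x = phi2R lam f n x := fun n x h1 h2 => hFR n x h1 h2
  have hFeqL : ∀ (n : ℤ) (x : ℝ), (lam n + lam (n+1))/2 ≤ x → x ≤ lam (n+1) →
      F x = phi2L lam f (n+1) x := by
    intro n x h1 h2
    exact hFL (n+1) x (by rw [show n+1-1 = n from by ring]; exact h1) h2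
  -- F has derivative D everywhere
  have hFD : ∀ x, HasDerivAt F (D x) x := by
    intro x
    have h1 : lam (nn x) ≤ x := hnn1 x
    have h2 : x < lam (nn x + 1) := hnn2 x
    set n := nn x with hn
    rcases eq_or_lt_of_le h1 with hxl | hxl
    · -- x = lam n
      have hDx : D x = alphaN lam f n := by
        rw [hDeq n x h1 (by rw [← hxl]; exact le_of_lt (hmid n).1), ← hxl, DRf_node]
      rw [hDx]
      have ha : (lam (n-1) + lam n)/2 < x := by rw [← hxl]; linarith [hlt0 n]
      have hL : HasDerivWithinAt F (alphaN lam f n) (Set.Iic x) x := by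
        have heq : Set.EqOn F (phi2L lam f n) (Set.Icc ((lam (n-1) + lam n)/2) x) :=
          fun y hy => hFL n y hy.1 (hy.2.trans (le_of_eq hxl.symm))
        have hder : HasDerivWithinAt (phi2L lam f n) (alphaN lam f n)
            (Set.Icc ((lam (n-1) + lam n)/2) x) x := by
          have hd := (hasDerivAt_phi2L lam f n (hlt0 n) x).hasDerivWithinAt
            (s := Set.Icc ((lam (n-1) + lam n)/2) x)
          have : DLf lam f n x = alphaN lam f n := by rw [← hxl, DLf_node]
          rwa [this] at hd
        exact ((hder.congr heq (heq ⟨le_of_lt ha, le_rfl⟩)).mono_of_mem_nhdsWithin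
          (Icc_mem_nhdsLE_of_mem ⟨ha, le_rfl⟩))
      have hb : x < (lam n + lam (n+1))/2 := by rw [← hxl]; exact (hmid n).1
      have hR : HasDerivWithinAt F (alphaN lam f n) (Set.Ici x) x := by
        have heq : Set.EqOn F (phi2R lam f n) (Set.Icc x ((lam n + lam (n+1))/2)) :=
          fun y hy => hFR n y ((le_of_eq hxl).trans hy.1) hy.2
        have hder : HasDerivWithinAt (phi2R lam f n) (alphaN lam f n)
            (Set.Icc x ((lam n + lam (n+1))/2)) x := by
          have hd := (hasDerivAt_phi2R lam f n (hlt n) x).hasDerivWithinAt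
            (s := Set.Icc x ((lam n + lam (n+1))/2))
          have : DRf lam f n x = alphaN lam f n := by rw [← hxl, DRf_node]
          rwa [this] at hd
        exact ((hder.congr heq (heq ⟨le_rfl, le_of_lt hb⟩)).mono_of_mem_nhdsWithin
          (Icc_mem_nhdsGE_of_mem ⟨le_rfl, hb⟩))
      have := hL.union hR
      rw [Set.Iic_union_Ici] at this
      exact hasDerivWithinAt_univ.mp this
    · rcases lt_trichotomy x ((lam n + lam (n+1))/2) with hc | hc | hc
      · -- interior of right piece of node n
        have hne : F =ᶠ[nhds x] phi2R lam f n :=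
          Filter.eventuallyEq_of_mem (Ioo_mem_nhds hxl hc)
            (fun y hy => hFR n y (le_of_lt hy.1) (le_of_lt hy.2))
        have := (hasDerivAt_phi2R lam f n (hlt n) x).congr_of_eventuallyEq hne
        rwa [hDeq n x h1 (le_of_lt hc)]
      · -- x = μ_n
        have hDx : D x = DRf lam f n x := hDeq n x h1 (le_of_eq hc)
        rw [hDx]
        have hL : HasDerivWithinAt F (DRf lam f n x) (Set.Iic x) x := by
          have heq : Set.EqOn F (phi2R lam f n) (Set.Icc (lam n) x) :=
            fun y hy => hFR n y hy.1 (hy.2.trans (le_of_eq hc))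
          have hder := ((hasDerivAt_phi2R lam f n (hlt n) x).hasDerivWithinAt
            (s := Set.Icc (lam n) x))
          exact ((hder.congr heq (heq ⟨h1, le_rfl⟩)).mono_of_mem_nhdsWithin
            (Icc_mem_nhdsLE_of_mem ⟨hxl, le_rfl⟩))
        have hR : HasDerivWithinAt F (DRf lam f n x) (Set.Ici x) x := by
          have hb : x < lam (n+1) := h2
          have heq : Set.EqOn F (phi2L lam f (n+1)) (Set.Icc x (lam (n+1))) :=
            fun y hy => hFeqL n y ((le_of_eq hc.symm).trans hy.1) hy.2
          have hder := ((hasDerivAt_phi2L lam f (n+1) (by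
            have := hlt n; rwa [show n+1-1 = n from by ring]) x).hasDerivWithinAt
            (s := Set.Icc x (lam (n+1))))
          have hval : DLf lam f (n+1) x = DRf lam f n x := by
            rw [hc]
            exact (junction_deriv lam f n (hlt0 n) (hlt n) (hlt2 n)).symm
          rw [hval] at hder
          exact ((hder.congr heq (heq ⟨le_rfl, le_of_lt hb⟩)).mono_of_mem_nhdsWithin
            (Icc_mem_nhdsGE_of_mem ⟨le_rfl, hb⟩))
        have := hL.union hR
        rw [Set.Iic_union_Ici] at this
        exact hasDerivWithinAt_univ.mp this
      · -- interior of left piece of node n+1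
        have hne : F =ᶠ[nhds x] phi2L lam f (n+1) :=
          Filter.eventuallyEq_of_mem (Ioo_mem_nhds hc h2)
            (fun y hy => hFeqL n y (le_of_lt hy.1) (le_of_lt hy.2))
        have := (hasDerivAt_phi2L lam f (n+1) (by
          have := hlt n; rwa [show n+1-1 = n from by ring]) x).congr_of_eventuallyEq hne
        rwa [hDeq' n x (le_of_lt hc) (le_of_lt h2)]
  -- D is continuous
  have hDeqL : ∀ (n : ℤ) (y : ℝ), (lam (n-1) + lam n)/2 ≤ y → y ≤ lam n →
      D y = DLf lam f n y := by
    intro n y ha hb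
    have := hDeq' (n-1) y (by rw [show n-1+1 = n from by ring]; exact ha)
      (by rw [show n-1+1 = n from by ring]; exact hb)
    rwa [show n-1+1 = n from by ring] at this
  have hDcont : Continuous D := by
    rw [continuous_iff_continuousAt]
    intro x
    have h1 : lam (nn x) ≤ x := hnn1 x
    have h2 : x < lam (nn x + 1) := hnn2 x
    set n := nn x with hn
    rcases eq_or_lt_of_le h1 with hxl | hxl
    · have ha : (lam (n-1) + lam n)/2 < x := by rw [← hxl]; linarith [hlt0 n]
      have hb : x < (lam n + lam (n+1))/2 := by rw [← hxl]; exact (hmid n).1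
      have hL : ContinuousWithinAt D (Set.Iic x) x := by
        have heq : ∀ y ∈ Set.Icc ((lam (n-1) + lam n)/2) x, D y = DLf lam f n y :=
          fun y hy => hDeqL n y hy.1 (hy.2.trans (le_of_eq hxl.symm))
        exact (((continuous_DLf lam f n).continuousAt.continuousWithinAt).congr heq
          (heq x ⟨le_of_lt ha, le_rfl⟩)).mono_of_mem_nhdsWithin
          (Icc_mem_nhdsLE_of_mem ⟨ha, le_rfl⟩)
      have hR : ContinuousWithinAt D (Set.Ici x) x := by
        have heq : ∀ y ∈ Set.Icc x ((lam n + lam (n+1))/2), D y = DRf lam f n y :=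
          fun y hy => hDeq n y ((le_of_eq hxl).trans hy.1) hy.2
        exact (((continuous_DRf lam f n).continuousAt.continuousWithinAt).congr heq
          (heq x ⟨le_rfl, le_of_lt hb⟩)).mono_of_mem_nhdsWithin
          (Icc_mem_nhdsGE_of_mem ⟨le_rfl, hb⟩)
      have := hL.union hR
      rwa [Set.Iic_union_Ici, continuousWithinAt_univ] at this
    · rcases lt_trichotomy x ((lam n + lam (n+1))/2) with hc | hc | hc
      · have hne : D =ᶠ[nhds x] DRf lam f n :=
          Filter.eventuallyEq_of_mem (Ioo_mem_nhds hxl hc)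
            (fun y hy => hDeq n y (le_of_lt hy.1) (le_of_lt hy.2))
        exact (continuous_DRf lam f n).continuousAt.congr hne.symm
      · have hL : ContinuousWithinAt D (Set.Iic x) x := by
          have heq : ∀ y ∈ Set.Icc (lam n) x, D y = DRf lam f n y :=
            fun y hy => hDeq n y hy.1 (hy.2.trans (le_of_eq hc))
          exact (((continuous_DRf lam f n).continuousAt.continuousWithinAt).congr heq
            (heq x ⟨h1, le_rfl⟩)).mono_of_mem_nhdsWithin
            (Icc_mem_nhdsLE_of_mem ⟨hxl, le_rfl⟩)
        have hR : ContinuousWithinAt D (Set.Ici x) x := by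
          have heq : ∀ y ∈ Set.Icc x (lam (n+1)), D y = DLf lam f (n+1) y :=
            fun y hy => hDeq' n y ((le_of_eq hc.symm).trans hy.1) hy.2
          exact (((continuous_DLf lam f (n+1)).continuousAt.continuousWithinAt).congr heq
            (heq x ⟨le_rfl, le_of_lt h2⟩)).mono_of_mem_nhdsWithin
            (Icc_mem_nhdsGE_of_mem ⟨le_rfl, h2⟩)
        have := hL.union hR
        rwa [Set.Iic_union_Ici, continuousWithinAt_univ] at this
      · have hne : D =ᶠ[nhds x] DLf lam f (n+1) :=
          Filter.eventuallyEq_of_mem (Ioo_mem_nhds hc h2)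
            (fun y hy => hDeq' n y (le_of_lt hy.1) (le_of_lt hy.2))
        exact (continuous_DLf lam f (n+1)).continuousAt.congr hne.symm
  have hDG : ∀ x, HasDerivWithinAt D (G₀ x) (Set.Ioi x) x := by
    intro x
    have h1 : lam (nn x) ≤ x := hnn1 x
    have h2 : x < lam (nn x + 1) := hnn2 x
    set n := nn x with hn
    rcases lt_or_ge x ((lam n + lam (n+1))/2) with hc | hc
    · have hGx : G₀ x = dd2 lam f (n-1) *
          ((qdd ((x - lam n)/(lam (n+1) - lam n)) : ℝ) : ℂ) := by
        rw [hG₀]; unfold Gfun; rw [← hn, if_pos hc]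
      rw [hGx]
      have heq : ∀ y ∈ Set.Icc x ((lam n + lam (n+1))/2), D y = DRf lam f n y :=
        fun y hy => hDeq n y (h1.trans hy.1) hy.2
      exact (((hasDerivAt_DRf lam f n (hlt n) x).hasDerivWithinAt).congr heq
        (heq x ⟨le_rfl, le_of_lt hc⟩)).mono_of_mem_nhdsWithin
        (Icc_mem_nhdsGT_of_mem ⟨le_rfl, hc⟩)
    · have hGx : G₀ x = dd2 lam f n *
          ((qdd ((lam (n+1) - x)/(lam (n+1) - lam n)) : ℝ) : ℂ) := by
        rw [hG₀]; unfold Gfun; rw [← hn, if_neg (not_lt.mpr hc)]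
      rw [hGx]
      have heq : ∀ y ∈ Set.Icc x (lam (n+1)), D y = DLf lam f (n+1) y :=
        fun y hy => hDeq' n y (hc.trans hy.1) hy.2
      have hd := (hasDerivAt_DLf lam f (n+1) (by
        have := hlt n; rwa [show n+1-1 = n from by ring]) x).hasDerivWithinAt
        (s := Set.Icc x (lam (n+1)))
      rw [show n+1-1 = n from by ring] at hd
      exact (hd.congr heq (heq x ⟨le_rfl, le_of_lt h2⟩)).mono_of_mem_nhdsWithin
        (Icc_mem_nhdsGT_of_mem ⟨le_rfl, h2⟩)
  -- G₀ measurable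
  have hGmeas : Measurable G₀ := by
    refine measurable_of_cover (A := fun n => Set.Ico (lam n) (lam (n+1)))
      (fun n => measurableSet_Ico) (fun x => ⟨nn x, hnn1 x, hnn2 x⟩)
      (g := fun n x => if x < (lam n + lam (n+1))/2 then
          dd2 lam f (n - 1) * ((qdd ((x - lam n)/(lam (n+1) - lam n)) : ℝ) : ℂ)
        else dd2 lam f n * ((qdd ((lam (n+1) - x)/(lam (n+1) - lam n)) : ℝ) : ℂ))
      ?_ ?_
    · intro n
      refine Measurable.ite (measurableSet_lt measurable_id measurable_const) ?_ ?_
      · exact (continuous_const.mul (Complex.continuous_ofReal.comp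
          (continuous_qdd.comp ((continuous_id.sub continuous_const).div_const _)))).measurable
      · exact (continuous_const.mul (Complex.continuous_ofReal.comp
          (continuous_qdd.comp ((continuous_const.sub continuous_id).div_const _)))).measurable
    · intro n x hx
      have he : nn x = n := hnneq n x hx.1 hx.2
      rw [hG₀]; unfold Gfun; rw [he]
  have habs : ∀ x, ‖G₀ x‖ ≤
      8 * (‖dd2 lam f (nn x - 1)‖ + ‖dd2 lam f (nn x)‖) := by
    intro x
    have h1 := hnn1 x; have h2 := hnn2 x
    have hpos : 0 < lam (nn x + 1) - lam (nn x) := by linarith [hlt (nn x)]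
    have hA := norm_nonneg (dd2 lam f (nn x - 1))
    have hB := norm_nonneg (dd2 lam f (nn x))
    rw [hG₀]; unfold Gfun
    split_ifs with hc
    · rw [norm_mul, Complex.norm_real, Real.norm_eq_abs]
      have hu0 : 0 ≤ (x - lam (nn x))/(lam (nn x + 1) - lam (nn x)) :=
        div_nonneg (by linarith) (le_of_lt hpos)
      have hu1 : (x - lam (nn x))/(lam (nn x + 1) - lam (nn x)) ≤ 1/2 := by
        rw [div_le_iff₀ hpos]; linarith
      have := mul_le_mul_of_nonneg_left (abs_qdd_le hu0 hu1) hA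
      linarith
    · rw [norm_mul, Complex.norm_real, Real.norm_eq_abs]
      have hu0 : 0 ≤ (lam (nn x + 1) - x)/(lam (nn x + 1) - lam (nn x)) :=
        div_nonneg (by linarith) (le_of_lt hpos)
      have hu1 : (lam (nn x + 1) - x)/(lam (nn x + 1) - lam (nn x)) ≤ 1/2 := by
        rw [div_le_iff₀ hpos]
        push_neg at hc
        linarith
      have := mul_le_mul_of_nonneg_left (abs_qdd_le hu0 hu1) hB
      linarith
  have hGint : ∀ a b : ℝ, IntegrableOn G₀ (Set.Icc a b) volume := by
    intro a b
    rcases le_or_gt a b with hab | hab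
    swap
    · rw [Set.Icc_eq_empty (not_le.mpr hab)]; exact integrableOn_empty
    refine Measure.integrableOn_of_bounded
      (M := ∑ m ∈ Finset.Icc (nn a) (nn b),
        8 * (‖dd2 lam f (m-1)‖ + ‖dd2 lam f m‖))
      (measure_Icc_lt_top).ne hGmeas.aestronglyMeasurable ?_
    rw [ae_restrict_iff' measurableSet_Icc]
    refine Filter.Eventually.of_forall fun x hx => ?_
    have hmem : nn x ∈ Finset.Icc (nn a) (nn b) := by
      rw [Finset.mem_Icc]
      exact ⟨idx_le lam hmono (le_trans (hnn1 a) hx.1) (hnn2 x),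
        idx_le lam hmono (le_trans (hnn1 x) hx.2) (hnn2 b)⟩
    calc ‖G₀ x‖ = ‖G₀ x‖ := rfl
    _ ≤ 8 * (‖dd2 lam f (nn x - 1)‖ + ‖dd2 lam f (nn x)‖) := habs x
    _ ≤ _ := Finset.single_le_sum
      (f := fun m : ℤ => 8 * (‖dd2 lam f (m-1)‖ + ‖dd2 lam f m‖))
      (fun (m : ℤ) _ => by
      have := norm_nonneg (dd2 lam f (m-1))
      have := norm_nonneg (dd2 lam f m)
      positivity) hmem
  have hGae : G =ᵐ[volume] G₀ := by
    have hS : volume ((Set.range lam) ∪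
        (Set.range fun n : ℤ => (lam n + lam (n+1))/2)) = 0 :=
      Set.Countable.measure_zero ((Set.countable_range lam).union (Set.countable_range _)) _
    refine MeasureTheory.ae_iff.mpr (measure_mono_null (fun x hx => ?_) hS)
    simp only [Set.mem_setOf_eq] at hx
    by_contra hS'
    apply hx
    simp only [Set.mem_union, Set.mem_range, not_or, not_exists] at hS'
    have h1 := hnn1 x; have h2 := hnn2 x
    set n := nn x with hn
    have hx1 : lam n < x := lt_of_le_of_ne h1 (hS'.1 n)
    rcases lt_or_ge x ((lam n + lam (n+1))/2) with hc | hc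
    · rw [hGR n x hx1 hc, deriv_deriv_qcub, hG₀]
      unfold Gfun; rw [← hn, if_pos hc]
    · have hc' : (lam n + lam (n+1))/2 < x := lt_of_le_of_ne hc (hS'.2 n)
      have := hGL (n+1) x (by rw [show n+1-1 = n from by ring]; exact hc') h2
      rw [show n+1-1 = n from by ring] at this
      rw [this, deriv_deriv_qcub, hG₀]
      unfold Gfun; rw [← hn, if_neg (not_lt.mpr hc)]
  -- FTC
  have hFTC : ∀ a b : ℝ, a ≤ b → D b - D a = ∫ t in a..b, G t := by
    intro a b hab
    have h1 : ∫ t in a..b, G₀ t = D b - D a := by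
      apply intervalIntegral.integral_eq_sub_of_hasDeriv_right_of_le hab
        (hDcont.continuousOn) (fun x _ => hDG x)
      have : IntegrableOn G₀ (Set.uIcc a b) volume := by
        rw [Set.uIcc_of_le hab]; exact hGint a b
      exact this.intervalIntegrable
    rw [← h1]
    apply intervalIntegral.integral_congr_ae
    filter_upwards [hGae] with x hx _ using hx.symm
  refine ⟨⟨?_, ?_, ?_, ?_⟩, ?_⟩
  · -- ContDiff
    have h1 : ContDiff ℝ 1 F := contDiff_one_iff_deriv.mpr
      ⟨fun x => (hFD x).differentiableAt, by
        have : deriv F = D := funext fun x => (hFD x).deriv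
        rw [this]; exact hDcont⟩
    simpa using h1
  · -- LocallyIntegrable
    intro x
    refine ⟨Set.Icc (x-1) (x+1), Icc_mem_nhds (by linarith) (by linarith), ?_⟩
    exact (hGint (x-1) (x+1)).congr
      (hGae.symm.filter_mono (MeasureTheory.ae_mono Measure.restrict_le_self))
  · -- integral identity
    intro a b hab
    have : iteratedDeriv (2-1) F = deriv F := by norm_num [iteratedDeriv_one]
    rw [this]
    have hdF : deriv F = D := funext fun x => (hFD x).deriv
    rw [hdF]
    exact hFTC a b hab
  · -- interpolation
    intro n
    rw [hFeqR n (lam n) le_rfl (le_of_lt (hmid n).1), phi2R_node]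
  · -- the Lp bound
    intro p hp
    have hp0 : (0:ℝ) ≤ p := le_trans zero_le_one hp
    have hcong : (∫⁻ t, ENNReal.ofReal (‖G t‖ ^ p)) =
        ∫⁻ t, ENNReal.ofReal (‖G₀ t‖ ^ p) := by
      apply lintegral_congr_ae
      filter_upwards [hGae] with t ht
      rw [ht]
    rw [hcong]
    have hcover : (⋃ n : ℤ, Set.Ico (lam n) (lam (n+1))) = Set.univ := by
      ext x
      simp only [Set.mem_iUnion, Set.mem_Ico, Set.mem_univ, iff_true]
      exact ⟨nn x, hnn1 x, hnn2 x⟩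
    have hdisj : Pairwise (Function.onFun Disjoint
        (fun n : ℤ => Set.Ico (lam n) (lam (n+1)))) := by
      intro m k hmk
      rcases lt_or_gt_of_ne hmk with h | h
      · refine Set.Ico_disjoint_Ico.mpr ?_
        have : lam (m+1) ≤ lam k := hmono.monotone (by omega)
        exact inf_le_left.trans (this.trans le_sup_right)
      · refine Set.Ico_disjoint_Ico.mpr ?_
        have : lam (k+1) ≤ lam m := hmono.monotone (by omega)
        exact inf_le_right.trans (this.trans le_sup_left)
    have hsplit : (∫⁻ t, ENNReal.ofReal (‖G₀ t‖ ^ p)) =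
        ∑' n : ℤ, ∫⁻ t in Set.Ico (lam n) (lam (n+1)),
          ENNReal.ofReal (‖G₀ t‖ ^ p) := by
      conv_lhs => rw [← setLIntegral_univ, ← hcover]
      exact MeasureTheory.lintegral_iUnion (fun n => measurableSet_Ico) hdisj _
    rw [hsplit]
    set T : ℤ → ℝ≥0∞ :=
      fun n => ENNReal.ofReal ((lam (n+2) - lam n) * ‖dd2 lam f n‖ ^ p) with hT
    have hstep : ∀ (a b L : ℝ) (dd : ℂ),
        (∀ t ∈ Set.Ico a b, ‖G₀ t‖ ≤ 8 * ‖dd‖) → b - a ≤ L →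
        (∫⁻ t in Set.Ico a b, ENNReal.ofReal (‖G₀ t‖ ^ p)) ≤
          ENNReal.ofReal (8 ^ p) * ENNReal.ofReal (L * ‖dd‖ ^ p) := by
      intro a b L dd hbd hL
      have h8 : (0:ℝ) ≤ 8 := by norm_num
      have hdd0 := norm_nonneg dd
      calc (∫⁻ t in Set.Ico a b, ENNReal.ofReal (‖G₀ t‖ ^ p))
          ≤ ∫⁻ _ in Set.Ico a b, ENNReal.ofReal ((8 * ‖dd‖) ^ p) := by
            refine setLIntegral_mono measurable_const fun t ht => ?_
            exact ENNReal.ofReal_le_ofReal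
              (Real.rpow_le_rpow (norm_nonneg _) (hbd t ht) hp0)
        _ = ENNReal.ofReal ((8 * ‖dd‖) ^ p) * ENNReal.ofReal (b - a) := by
            rw [setLIntegral_const, Real.volume_Ico]
        _ = ENNReal.ofReal (8 ^ p) * (ENNReal.ofReal (‖dd‖ ^ p) *
              ENNReal.ofReal (b - a)) := by
            rw [Real.mul_rpow h8 hdd0, ENNReal.ofReal_mul (Real.rpow_nonneg h8 p), mul_assoc]
        _ ≤ ENNReal.ofReal (8 ^ p) * ENNReal.ofReal (L * ‖dd‖ ^ p) := by
            refine mul_le_mul_right ?_ _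
            rw [← ENNReal.ofReal_mul (Real.rpow_nonneg hdd0 p)]
            refine ENNReal.ofReal_le_ofReal ?_
            have := mul_le_mul_of_nonneg_left hL (Real.rpow_nonneg hdd0 p)
            nlinarith [Real.rpow_nonneg hdd0 p]
    have hbound : ∀ n : ℤ, (∫⁻ t in Set.Ico (lam n) (lam (n+1)),
        ENNReal.ofReal (‖G₀ t‖ ^ p)) ≤
        ENNReal.ofReal (8 ^ p) * (T (n-1) + T n) := by
      intro n
      have hmu1 : lam n ≤ (lam n + lam (n+1))/2 := le_of_lt (hmid n).1
      have hmu2 : (lam n + lam (n+1))/2 ≤ lam (n+1) := le_of_lt (hmid n).2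
      rw [← Set.Ico_union_Ico_eq_Ico hmu1 hmu2,
        lintegral_union measurableSet_Ico
          (Set.Ico_disjoint_Ico.mpr (inf_le_left.trans le_sup_right))]
      have hpos : 0 < lam (n+1) - lam n := by linarith [hlt n]
      have hA : ∀ t ∈ Set.Ico (lam n) ((lam n + lam (n+1))/2),
          ‖G₀ t‖ ≤ 8 * ‖dd2 lam f (n-1)‖ := by
        intro t ht
        have hnt : nn t = n := hnneq n t ht.1 (lt_trans ht.2 (hmid n).2)
        rw [hG₀]; unfold Gfun; rw [hnt, if_pos ht.2, norm_mul, Complex.norm_real, Real.norm_eq_abs]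
        have hu0 : 0 ≤ (t - lam n)/(lam (n+1) - lam n) :=
          div_nonneg (by linarith [ht.1]) (le_of_lt hpos)
        have hu1 : (t - lam n)/(lam (n+1) - lam n) ≤ 1/2 := by
          rw [div_le_iff₀ hpos]; have := ht.2; linarith
        have := mul_le_mul_of_nonneg_left (abs_qdd_le hu0 hu1)
          (norm_nonneg (dd2 lam f (n-1)))
        linarith
      have hB : ∀ t ∈ Set.Ico ((lam n + lam (n+1))/2) (lam (n+1)),
          ‖G₀ t‖ ≤ 8 * ‖dd2 lam f n‖ := by
        intro t ht
        have hnt : nn t = n := hnneq n t (le_trans hmu1 ht.1) ht.2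
        rw [hG₀]; unfold Gfun; rw [hnt, if_neg (not_lt.mpr ht.1), norm_mul, Complex.norm_real, Real.norm_eq_abs]
        have hu0 : 0 ≤ (lam (n+1) - t)/(lam (n+1) - lam n) :=
          div_nonneg (by linarith [ht.2]) (le_of_lt hpos)
        have hu1 : (lam (n+1) - t)/(lam (n+1) - lam n) ≤ 1/2 := by
          rw [div_le_iff₀ hpos]; have := ht.1; linarith
        have := mul_le_mul_of_nonneg_left (abs_qdd_le hu0 hu1)
          (norm_nonneg (dd2 lam f n))
        linarith
      have hL1 : (lam n + lam (n+1))/2 - lam n ≤ lam (n-1+2) - lam (n-1) := by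
        rw [show n-1+2 = n+1 from by ring]
        have := hlt0 n; linarith [hlt n]
      have hL2 : lam (n+1) - (lam n + lam (n+1))/2 ≤ lam (n+2) - lam n := by
        linarith [hlt n, hlt2 n]
      have h1 := hstep (lam n) ((lam n + lam (n+1))/2) (lam (n-1+2) - lam (n-1))
        (dd2 lam f (n-1)) hA hL1
      have h2 := hstep ((lam n + lam (n+1))/2) (lam (n+1)) (lam (n+2) - lam n)
        (dd2 lam f n) hB hL2
      calc _ ≤ ENNReal.ofReal (8 ^ p) * ENNReal.ofReal
            ((lam (n-1+2) - lam (n-1)) * ‖dd2 lam f (n-1)‖ ^ p) +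
          ENNReal.ofReal (8 ^ p) * ENNReal.ofReal
            ((lam (n+2) - lam n) * ‖dd2 lam f n‖ ^ p) := add_le_add h1 h2
      _ = ENNReal.ofReal (8 ^ p) * (T (n-1) + T n) := by rw [mul_add]
    calc (∑' n : ℤ, ∫⁻ t in Set.Ico (lam n) (lam (n+1)),
          ENNReal.ofReal (‖G₀ t‖ ^ p))
        ≤ ∑' n : ℤ, ENNReal.ofReal (8 ^ p) * (T (n-1) + T n) :=
          ENNReal.tsum_le_tsum hbound
      _ = ENNReal.ofReal (8 ^ p) * ((∑' n : ℤ, T (n-1)) + ∑' n : ℤ, T n) := by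
          rw [ENNReal.tsum_mul_left, ENNReal.tsum_add]
      _ = ENNReal.ofReal (8 ^ p) * (2 * ∑' n : ℤ, T n) := by
          have he := (Equiv.subRight (1:ℤ)).tsum_eq T
          simp only [Equiv.subRight_apply] at he
          rw [he, two_mul]
      _ = (ENNReal.ofReal (8 ^ p) * 2) * ∑' n : ℤ, T n := by ring
      _ ≤ ENNReal.ofReal ((16:ℝ) ^ p) * ∑' n : ℤ, T n := by
          refine mul_le_mul_left ?_ _
          have h2 : (ENNReal.ofReal (8 ^ p) * 2) = ENNReal.ofReal (8 ^ p * 2) := by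
            rw [ENNReal.ofReal_mul (Real.rpow_nonneg (by norm_num) p)]
            norm_num
          rw [h2]
          refine ENNReal.ofReal_le_ofReal ?_
          have h16 : (16:ℝ) ^ p = 2 ^ p * 8 ^ p := by
            rw [← Real.mul_rpow (by norm_num) (by norm_num)]
            norm_num
          have h2p : (2:ℝ) ≤ 2 ^ p := by
            calc (2:ℝ) = 2 ^ (1:ℝ) := by rw [Real.rpow_one]
            _ ≤ 2 ^ p := Real.rpow_le_rpow_of_exponent_le (by norm_num) hp
          rw [h16]
          nlinarith [Real.rpow_nonneg (show (0:ℝ) ≤ 8 by norm_num) p]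
end
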